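/- arXiv:2303.08575 — 6 statements merged into one kernel-verified Lean document; each statement's English description precedes it below -/
import Mathlib

section
/- Consider the matrix recursion P_{k+1} = A_k P_k A_kᵀ + Q_k with symmetric initial value P_0, where A_k ∈ ℝ^{n×n} and symmetric Q_k ∈ ℝ^{n×n} satisfy ‖A_k − Ā_k‖₂ → 0 and ‖Q_k − Q̄_k‖₂ → 0 as k → ∞, with Ā_· and Q̄_· 𝒯-periodic sequences, Q̄_k symmetric, and the monodromy matrix Ā_{k+𝒯−1}···Ā_k Schur stable (spectral radius < 1). Let P̄_· be a 𝒯-periodic sequence of symmetric matrices satisfying the discrete-time periodic Lyapunov equation P̄_{k+1} = Ā_k P̄_k Ā_kᵀ + Q̄_k for all k. Then lim_{k→∞} (P_k − P̄_k) = 0. -/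
open Matrix Filter

/-- A real square matrix is Schur stable if every complex eigenvalue has modulus `< 1`. -/
def SchurStable {n : ℕ} (A : Matrix (Fin n) (Fin n) ℝ) : Prop :=
  ∀ μ ∈ spectrum ℂ (A.map (algebraMap ℝ ℂ)), ‖μ‖ < 1

/-- `phiProd F k h = F (k+h-1) * ⋯ * F (k+1) * F k`. -/
def phiProd {n : ℕ} (F : ℕ → Matrix (Fin n) (Fin n) ℝ) (k : ℕ) :
    ℕ → Matrix (Fin n) (Fin n) ℝ
  | 0 => 1
  | h + 1 => F (k + h) * phiProd F k h

open scoped Matrix.Norms.L2Operator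

namespace S5aux

variable {n : ℕ}

lemma norm_one_le : ‖(1 : Matrix (Fin n) (Fin n) ℝ)‖ ≤ 1 := by
  have : ‖(1 : Matrix (Fin n) (Fin n) ℝ)‖
      = ‖(1 : EuclideanSpace ℝ (Fin n) →L[ℝ] EuclideanSpace ℝ (Fin n))‖ := by
    rw [Matrix.cstar_norm_def, _root_.map_one]
  rw [this, ContinuousLinearMap.one_def]
  exact ContinuousLinearMap.norm_id_le

lemma norm_transpose (X : Matrix (Fin n) (Fin n) ℝ) : ‖Xᵀ‖ = ‖X‖ := by
  rw [← Matrix.l2_opNorm_conjTranspose X, Matrix.conjTranspose]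
  congr 1

lemma norm_le_norm_map (B : Matrix (Fin n) (Fin n) ℝ) :
    ‖B‖ ≤ ‖B.map (algebraMap ℝ ℂ)‖ := by
  rw [l2_opNorm_def]
  apply ContinuousLinearMap.opNorm_le_bound _ (norm_nonneg _)
  intro x
  set z : EuclideanSpace ℂ (Fin n) := (WithLp.equiv _ _).symm (fun i => ((x i : ℝ) : ℂ)) with hz
  have h1 := Matrix.l2_opNorm_mulVec (B.map (algebraMap ℝ ℂ)) z
  have hnz : ‖z‖ = ‖x‖ := by
    rw [EuclideanSpace.norm_eq, EuclideanSpace.norm_eq]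
    congr 1
    apply Finset.sum_congr rfl
    intro i _
    simp [z]
  rw [hnz] at h1
  refine le_trans (le_of_eq ?_) h1
  rw [EuclideanSpace.norm_eq, EuclideanSpace.norm_eq]
  congr 1
  apply Finset.sum_congr rfl
  intro i _
  have h2 : ((EuclideanSpace.equiv (Fin n) ℂ).symm <| (B.map (algebraMap ℝ ℂ)) *ᵥ z) i
      = ((B *ᵥ (fun j => x j)) i : ℂ) := by
    simp [Matrix.mulVec, dotProduct, z]
  rw [h2]
  have hl : ((Matrix.toEuclideanLin.trans LinearMap.toContinuousLinearMap) B x : Fin n → ℝ) i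
      = (B *ᵥ (fun j => x j)) i := rfl
  rw [hl]
  simp

lemma phiProd_add (F : ℕ → Matrix (Fin n) (Fin n) ℝ) (k a : ℕ) :
    ∀ b, phiProd F k (a + b) = phiProd F (k + a) b * phiProd F k a := by
  intro b
  induction b with
  | zero => simp [phiProd]
  | succ b ih =>
      show phiProd F k ((a + b) + 1) = _
      rw [phiProd, ih, phiProd, mul_assoc, show k + a + b = k + (a + b) from by omega]

lemma phiProd_norm_le (F : ℕ → Matrix (Fin n) (Fin n) ℝ) (k : ℕ) (M : ℝ) (hM : 1 ≤ M)
    (hF : ∀ i, k ≤ i → ‖F i‖ ≤ M) : ∀ h, ‖phiProd F k h‖ ≤ M ^ h := by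
  intro h
  induction h with
  | zero => simpa [phiProd] using norm_one_le
  | succ h ih =>
      rw [phiProd]
      calc ‖F (k + h) * phiProd F k h‖ ≤ ‖F (k + h)‖ * ‖phiProd F k h‖ := norm_mul_le _ _
        _ ≤ M * M ^ h := by
            apply mul_le_mul (hF _ (by omega)) ih (norm_nonneg _) (by linarith)
        _ = M ^ (h + 1) := (pow_succ' M h).symm

lemma phiProd_shift (F : ℕ → Matrix (Fin n) (Fin n) ℝ) (T : ℕ)
    (hper : ∀ k, F (k + T) = F k) (k : ℕ) : ∀ h, phiProd F (k + T) h = phiProd F k h := by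
  intro h
  induction h with
  | zero => rfl
  | succ h ih =>
      rw [phiProd, phiProd, ih]
      congr 1
      rw [show k + T + h = (k + h) + T by omega, hper]

lemma phiProd_shift_mul (F : ℕ → Matrix (Fin n) (Fin n) ℝ) (T : ℕ)
    (hper : ∀ k, F (k + T) = F k) (k : ℕ) : ∀ m h, phiProd F (k + m * T) h = phiProd F k h := by
  intro m
  induction m with
  | zero => simp
  | succ m ih =>
      intro h
      rw [show k + (m + 1) * T = (k + m * T) + T by ring, phiProd_shift F T hper _ h, ih h]

lemma phiProd_pow (F : ℕ → Matrix (Fin n) (Fin n) ℝ) (T : ℕ)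
    (hper : ∀ k, F (k + T) = F k) (k : ℕ) :
    ∀ q, phiProd F k (q * T) = (phiProd F k T) ^ q := by
  intro q
  induction q with
  | zero => simp [Nat.zero_mul, phiProd]
  | succ q ih =>
      rw [show (q + 1) * T = q * T + T by ring, phiProd_add, phiProd_shift_mul F T hper k q T,
        ih, pow_succ']

lemma phiProd_diff (F G : ℕ → Matrix (Fin n) (Fin n) ℝ) (k : ℕ) (M δ : ℝ) (hM : 1 ≤ M)
    (hδ : 0 ≤ δ)
    (hF : ∀ i, k ≤ i → ‖F i‖ ≤ M) (hG : ∀ i, k ≤ i → ‖G i‖ ≤ M)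
    (hd : ∀ i, k ≤ i → ‖F i - G i‖ ≤ δ) :
    ∀ h, ‖phiProd F k h - phiProd G k h‖ ≤ h * M ^ h * δ := by
  intro h
  induction h with
  | zero => simp [phiProd]
  | succ h ih =>
      have key : phiProd F k (h+1) - phiProd G k (h+1)
          = F (k + h) * (phiProd F k h - phiProd G k h)
            + (F (k + h) - G (k + h)) * phiProd G k h := by
        rw [phiProd, phiProd]; noncomm_ring
      rw [key]
      have h1 : ‖F (k + h) * (phiProd F k h - phiProd G k h)‖ ≤ M * (h * M ^ h * δ) := by
        refine le_trans (norm_mul_le _ _) ?_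
        exact mul_le_mul (hF _ (by omega)) ih (norm_nonneg _) (by linarith)
      have h2 : ‖(F (k + h) - G (k + h)) * phiProd G k h‖ ≤ δ * M ^ h := by
        refine le_trans (norm_mul_le _ _) ?_
        exact mul_le_mul (hd _ (by omega)) (phiProd_norm_le G k M hM hG h) (norm_nonneg _) hδ
      refine le_trans (norm_add_le _ _) ?_
      refine le_trans (add_le_add h1 h2) ?_
      have hMp : (0:ℝ) ≤ M ^ h := by positivity
      have heq : M * (h * M ^ h * δ) + δ * M ^ h = (h * (M * M ^ h) + M ^ h) * δ := by ring
      rw [heq, pow_succ']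
      have hle : M ^ h ≤ M * M ^ h := le_mul_of_one_le_left hMp hM
      push_cast
      nlinarith [mul_nonneg (mul_nonneg (Nat.cast_nonneg h)
        (mul_nonneg (by linarith : (0:ℝ) ≤ M) hMp)) hδ]

lemma voc (A E d : ℕ → Matrix (Fin n) (Fin n) ℝ)
    (hE : ∀ k, E (k + 1) = A k * E k * (A k)ᵀ + d k) (k : ℕ) :
    ∀ m, E (k + m) = phiProd A k m * E k * (phiProd A k m)ᵀ +
      ∑ i ∈ Finset.range m,
        phiProd A (k + i + 1) (m - 1 - i) * d (k + i) * (phiProd A (k + i + 1) (m - 1 - i))ᵀ := by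
  intro m
  induction m with
  | zero => simp [phiProd]
  | succ m ih =>
      have h1 : E (k + (m + 1)) = A (k + m) * E (k + m) * (A (k + m))ᵀ + d (k + m) := by
        rw [show k + (m + 1) = (k + m) + 1 from by omega, hE]
      rw [h1, ih]
      have hstep : ∀ i, i < m →
          A (k + m) * phiProd A (k + i + 1) (m - 1 - i) = phiProd A (k + i + 1) (m - i) := by
        intro i hi
        have h2 : m - i = (m - 1 - i) + 1 := by omega
        rw [h2, phiProd, show k + i + 1 + (m - 1 - i) = k + m from by omega]
      have hmain : A (k + m) * phiProd A k m = phiProd A k (m + 1) := by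
        rw [phiProd]
      rw [mul_add, add_mul, Finset.mul_sum, Finset.sum_mul]
      rw [Finset.sum_range_succ]
      have hsum : ∀ i ∈ Finset.range m,
          A (k + m) * (phiProd A (k + i + 1) (m - 1 - i) * d (k + i) *
            (phiProd A (k + i + 1) (m - 1 - i))ᵀ) * (A (k + m))ᵀ
          = phiProd A (k + i + 1) (m + 1 - 1 - i) * d (k + i) *
            (phiProd A (k + i + 1) (m + 1 - 1 - i))ᵀ := by
        intro i hi
        rw [Finset.mem_range] at hi
        have h3 : m + 1 - 1 - i = m - i := by omega
        rw [h3, ← hstep i hi]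
        rw [Matrix.transpose_mul]
        noncomm_ring
      rw [Finset.sum_congr rfl hsum]
      have hlast : phiProd A (k + m + 1) (m + 1 - 1 - m) * d (k + m) *
          (phiProd A (k + m + 1) (m + 1 - 1 - m))ᵀ = d (k + m) := by
        have h4 : m + 1 - 1 - m = 0 := by omega
        rw [h4]
        show (1 : Matrix (Fin n) (Fin n) ℝ) * d (k + m) * (1 : Matrix (Fin n) (Fin n) ℝ)ᵀ = _
        rw [Matrix.transpose_one, one_mul, mul_one]
      rw [hlast, ← hmain, Matrix.transpose_mul]
      noncomm_ring

lemma geom_div_le (s : ℝ) (hs0 : 0 ≤ s) (hs1 : s < 1) (m : ℕ) :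
    ∑ q ∈ Finset.range m, s ^ q ≤ 1 / (1 - s) := by
  rw [geom_sum_eq (by linarith : s ≠ 1)]
  have h1 : (0:ℝ) < 1 - s := by linarith
  have heq : (s ^ m - 1) / (s - 1) = (1 - s ^ m) / (1 - s) := by
    rw [← neg_div_neg_eq]; ring_nf
  rw [heq, div_le_div_iff₀ h1 h1]
  have hp : (0:ℝ) ≤ s ^ m := by positivity
  nlinarith

lemma sum_pow_div_le (s : ℝ) (hs0 : 0 ≤ s) (hs1 : s < 1) (N : ℕ) (hN : 1 ≤ N) (m : ℕ) :
    ∑ i ∈ Finset.range m, s ^ (i / N) ≤ N / (1 - s) := by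
  have hmap : ∀ i ∈ Finset.range m, i / N ∈ Finset.range m := by
    intro i hi
    rw [Finset.mem_range] at *
    exact lt_of_le_of_lt (Nat.div_le_self i N) hi
  rw [← Finset.sum_fiberwise_of_maps_to hmap (fun i => s ^ (i / N))]
  have hfib : ∀ q ∈ Finset.range m,
      ∑ i ∈ Finset.range m with i / N = q, s ^ (i / N) ≤ N * s ^ q := by
    intro q _
    have hcongr : ∑ i ∈ Finset.range m with i / N = q, s ^ (i / N)
        = ∑ i ∈ Finset.range m with i / N = q, s ^ q := by
      apply Finset.sum_congr rfl
      intro i hi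
      rw [Finset.mem_filter] at hi
      rw [hi.2]
    rw [hcongr, Finset.sum_const, nsmul_eq_mul]
    have hcard : (Finset.range m |>.filter (fun i => i / N = q)).card ≤ N := by
      have hsub : (Finset.range m |>.filter (fun i => i / N = q))
          ⊆ Finset.Ico (q * N) (q * N + N) := by
        intro i hi
        rw [Finset.mem_filter] at hi
        have h1 : N * (i / N) + i % N = i := Nat.div_add_mod i N
        rw [hi.2] at h1
        have h2 : i % N < N := Nat.mod_lt i (by omega)
        rw [Finset.mem_Ico, mul_comm q N]
        omega
      calc _ ≤ (Finset.Ico (q * N) (q * N + N)).card := Finset.card_le_card hsub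
        _ = N := by rw [Nat.card_Ico]; omega
    have hp : (0:ℝ) ≤ s ^ q := by positivity
    apply mul_le_mul_of_nonneg_right _ hp
    exact_mod_cast hcard
  calc ∑ q ∈ Finset.range m, ∑ i ∈ Finset.range m with i / N = q, s ^ (i / N)
      ≤ ∑ q ∈ Finset.range m, (N : ℝ) * s ^ q := Finset.sum_le_sum hfib
    _ = N * ∑ q ∈ Finset.range m, s ^ q := by rw [Finset.mul_sum]
    _ ≤ N * (1 / (1 - s)) := by
        apply mul_le_mul_of_nonneg_left (geom_div_le s hs0 hs1 m) (by positivity)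
    _ = N / (1 - s) := by ring

lemma core (A E d : ℕ → Matrix (Fin n) (Fin n) ℝ)
    (hE : ∀ k, E (k + 1) = A k * E k * (A k)ᵀ + d k)
    (C σ : ℝ) (hC : 1 ≤ C) (hσ0 : 0 < σ) (hσ1 : σ < 1)
    (N : ℕ) (hN : 1 ≤ N) (K : ℕ)
    (hbound : ∀ k m, K ≤ k → ‖phiProd A k m‖ ≤ C * σ ^ (m / N))
    (hd : Tendsto (fun k => ‖d k‖) atTop (nhds 0)) :
    Tendsto E atTop (nhds 0) := by
  rw [NormedAddCommGroup.tendsto_nhds_zero]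
  intro ε hε
  set s := σ ^ 2 with hs
  have hs0 : 0 < s := by positivity
  have hs1 : s < 1 := by nlinarith
  set c2 := C ^ 2 with hc2def
  have hc2 : 1 ≤ c2 := by nlinarith
  have hsq : ∀ k m, K ≤ k → ‖phiProd A k m‖ * ‖phiProd A k m‖ ≤ c2 * s ^ (m / N) := by
    intro k m hk
    have hb := hbound k m hk
    have h0 : (0:ℝ) ≤ ‖phiProd A k m‖ := norm_nonneg _
    have hpow : s ^ (m / N) = (σ ^ (m / N)) ^ 2 := by
      rw [hs, ← pow_mul, ← pow_mul, mul_comm]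
    have hσe : (0:ℝ) ≤ σ ^ (m / N) := by positivity
    rw [hpow, hc2def]
    nlinarith
  have keybound : ∀ k m, K ≤ k → ‖E (k + m)‖ ≤ c2 * s ^ (m / N) * ‖E k‖
      + c2 * ∑ i ∈ Finset.range m, s ^ ((m - 1 - i) / N) * ‖d (k + i)‖ := by
    intro k m hk
    rw [voc A E d hE k m]
    refine le_trans (norm_add_le _ _) (add_le_add ?_ ?_)
    · calc ‖phiProd A k m * E k * (phiProd A k m)ᵀ‖
          ≤ ‖phiProd A k m * E k‖ * ‖(phiProd A k m)ᵀ‖ := norm_mul_le _ _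
        _ ≤ ‖phiProd A k m‖ * ‖E k‖ * ‖(phiProd A k m)ᵀ‖ :=
            mul_le_mul_of_nonneg_right (norm_mul_le _ _) (norm_nonneg _)
        _ = ‖phiProd A k m‖ * ‖phiProd A k m‖ * ‖E k‖ := by rw [norm_transpose]; ring
        _ ≤ c2 * s ^ (m / N) * ‖E k‖ :=
            mul_le_mul_of_nonneg_right (hsq k m hk) (norm_nonneg _)
    · refine le_trans (norm_sum_le _ _) ?_
      rw [Finset.mul_sum]
      apply Finset.sum_le_sum
      intro i hi
      have hki : K ≤ k + i + 1 := by omega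
      calc ‖phiProd A (k + i + 1) (m - 1 - i) * d (k + i) * (phiProd A (k + i + 1) (m - 1 - i))ᵀ‖
          ≤ ‖phiProd A (k + i + 1) (m - 1 - i) * d (k + i)‖ *
              ‖(phiProd A (k + i + 1) (m - 1 - i))ᵀ‖ := norm_mul_le _ _
        _ ≤ ‖phiProd A (k + i + 1) (m - 1 - i)‖ * ‖d (k + i)‖ *
              ‖(phiProd A (k + i + 1) (m - 1 - i))ᵀ‖ :=
            mul_le_mul_of_nonneg_right (norm_mul_le _ _) (norm_nonneg _)
        _ = ‖phiProd A (k + i + 1) (m - 1 - i)‖ * ‖phiProd A (k + i + 1) (m - 1 - i)‖ *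
              ‖d (k + i)‖ := by
            rw [norm_transpose]; ring
        _ ≤ c2 * s ^ ((m - 1 - i) / N) * ‖d (k + i)‖ :=
            mul_le_mul_of_nonneg_right (hsq _ _ hki) (norm_nonneg _)
        _ = c2 * (s ^ ((m - 1 - i) / N) * ‖d (k + i)‖) := by ring
  have hG0 : (0:ℝ) < 1 - s := by linarith
  set ε1 := ε * (1 - s) / (2 * c2 * N) with hε1def
  have hε1 : 0 < ε1 := by
    apply div_pos (by positivity)
    have hNp : (0:ℝ) < N := by exact_mod_cast hN
    positivity
  obtain ⟨K0, hK0⟩ := eventually_atTop.1 (hd.eventually_lt_const hε1)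
  set K1 := max K K0 with hK1def
  have hK1K : K ≤ K1 := le_max_left _ _
  have hdsmall : ∀ i, K1 ≤ i → ‖d i‖ ≤ ε1 := fun i hi => (hK0 i (le_trans (le_max_right _ _) hi)).le
  have hEbound : ∀ m, ‖E (K1 + m)‖ ≤ c2 * s ^ (m / N) * ‖E K1‖ + ε / 2 := by
    intro m
    refine le_trans (keybound K1 m hK1K) (add_le_add_right ?_ _)
    have hsum : ∑ i ∈ Finset.range m, s ^ ((m - 1 - i) / N) * ‖d (K1 + i)‖
        ≤ ε1 * (N / (1 - s)) := by
      calc ∑ i ∈ Finset.range m, s ^ ((m - 1 - i) / N) * ‖d (K1 + i)‖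
          ≤ ∑ i ∈ Finset.range m, s ^ ((m - 1 - i) / N) * ε1 := by
            apply Finset.sum_le_sum
            intro i _
            exact mul_le_mul_of_nonneg_left (hdsmall _ (by omega)) (by positivity)
        _ = (∑ i ∈ Finset.range m, s ^ ((m - 1 - i) / N)) * ε1 := by rw [Finset.sum_mul]
        _ = (∑ i ∈ Finset.range m, s ^ (i / N)) * ε1 := by
            rw [Finset.sum_range_reflect (fun i => s ^ (i / N)) m]
        _ ≤ (N / (1 - s)) * ε1 :=
            mul_le_mul_of_nonneg_right (sum_pow_div_le s hs0.le hs1 N hN m) hε1.le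
        _ = ε1 * (N / (1 - s)) := by ring
    refine le_trans (mul_le_mul_of_nonneg_left hsum (by positivity : (0:ℝ) ≤ c2)) ?_
    have hNpos : (0:ℝ) < N := by exact_mod_cast hN
    have hc2pos : (0:ℝ) < c2 := by linarith
    have hne1 : (1 - s) ≠ 0 := ne_of_gt hG0
    have hne2 : c2 ≠ 0 := ne_of_gt hc2pos
    have hne3 : (N:ℝ) ≠ 0 := ne_of_gt hNpos
    have heq : c2 * (ε1 * (↑N / (1 - s))) = ε / 2 := by
      rw [hε1def]; field_simp
    exact le_of_eq heq
  obtain ⟨q0, hq0⟩ : ∃ q0, c2 * s ^ q0 * ‖E K1‖ < ε / 2 := by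
    have htend : Tendsto (fun q : ℕ => c2 * s ^ q * ‖E K1‖) atTop (nhds 0) := by
      have h5 := tendsto_pow_atTop_nhds_zero_of_lt_one hs0.le hs1
      have h6 := (h5.const_mul c2).mul_const ‖E K1‖
      simpa using h6
    exact (eventually_atTop.1 (htend.eventually_lt_const (by linarith))).imp
      (fun q0 hq0 => hq0 q0 le_rfl)
  rw [eventually_atTop]
  refine ⟨K1 + N * (q0 + 1), fun k hk => ?_⟩
  have hm : k = K1 + (k - K1) := by omega
  set m := k - K1 with hmdef
  have hmN : q0 ≤ m / N := by
    have h1 : N * (q0 + 1) ≤ m := by omega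
    have h2 : q0 + 1 ≤ m / N := (Nat.le_div_iff_mul_le (by omega : 0 < N)).2
      (by rw [mul_comm]; omega)
    omega
  have hdec : s ^ (m / N) ≤ s ^ q0 := pow_le_pow_of_le_one hs0.le hs1.le hmN
  calc ‖E k‖ = ‖E (K1 + m)‖ := by rw [← hm]
    _ ≤ c2 * s ^ (m / N) * ‖E K1‖ + ε / 2 := hEbound m
    _ ≤ c2 * s ^ q0 * ‖E K1‖ + ε / 2 := by
        have h7 := mul_le_mul_of_nonneg_right
          (mul_le_mul_of_nonneg_left hdec (by positivity : (0:ℝ) ≤ c2)) (norm_nonneg (E K1))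
        linarith
    _ < ε := by linarith

lemma exists_pow_norm_lt_one (hn : 0 < n) (Φ : Matrix (Fin n) (Fin n) ℝ)
    (h : SchurStable Φ) : ∃ m, 1 ≤ m ∧ ‖Φ ^ m‖ < 1 := by
  haveI : Nonempty (Fin n) := ⟨⟨0, hn⟩⟩
  set a := Φ.map (algebraMap ℝ ℂ) with ha
  have hrad : spectralRadius ℂ a < 1 := by
    have h1 : ∀ z ∈ spectrum ℂ a, ‖z‖₊ < (1 : NNReal) := by
      intro z hz
      have h2 := h z hz
      rwa [← coe_nnnorm, ← NNReal.coe_one, NNReal.coe_lt_coe] at h2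
    simpa using spectrum.spectralRadius_lt_of_forall_lt (a := a) h1
  have hg := spectrum.pow_norm_pow_one_div_tendsto_nhds_spectralRadius a
  have hev := hg.eventually_lt_const hrad
  obtain ⟨M0, hM0⟩ := eventually_atTop.1 hev
  refine ⟨max M0 1, le_max_right _ _, ?_⟩
  set m := max M0 1 with hm
  have hm1 : 1 ≤ m := le_max_right _ _
  have h2 : ENNReal.ofReal (‖a ^ m‖ ^ (1 / (m:ℝ))) < 1 := hM0 m (le_max_left _ _)
  have h3 : ‖a ^ m‖ ^ (1 / (m:ℝ)) < 1 := by
    rwa [← ENNReal.ofReal_one, ENNReal.ofReal_lt_ofReal_iff (by norm_num)] at h2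
  have h4 : ‖a ^ m‖ < 1 := by
    by_contra hcon
    push_neg at hcon
    have h5 : (1:ℝ) ≤ ‖a ^ m‖ ^ (1 / (m:ℝ)) := by
      apply Real.one_le_rpow hcon
      positivity
    linarith
  have h5 : (Φ ^ m).map (algebraMap ℝ ℂ) = a ^ m := by
    rw [ha]
    have h6 := map_pow ((algebraMap ℝ ℂ).mapMatrix) Φ m
    simpa [RingHom.mapMatrix_apply] using h6
  calc ‖Φ ^ m‖ ≤ ‖(Φ ^ m).map (algebraMap ℝ ℂ)‖ := norm_le_norm_map _
    _ = ‖a ^ m‖ := by rw [h5]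
    _ < 1 := h4

lemma periodic_norm_bound (f : ℕ → Matrix (Fin n) (Fin n) ℝ) (T : ℕ) (hT : 1 ≤ T)
    (hper : ∀ k, f (k + T) = f k) :
    ∃ Mb : ℝ, 1 ≤ Mb ∧ ∀ k, ‖f k‖ ≤ Mb := by
  refine ⟨1 + ∑ j ∈ Finset.range T, ‖f j‖, ?_, ?_⟩
  · have hp : (0:ℝ) ≤ ∑ j ∈ Finset.range T, ‖f j‖ :=
      Finset.sum_nonneg fun j _ => norm_nonneg _
    linarith
  · intro k
    have hshift : ∀ m r, f (r + m * T) = f r := by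
      intro m
      induction m with
      | zero => simp
      | succ m ih =>
          intro r
          rw [show r + (m + 1) * T = (r + m * T) + T by ring, hper, ih]
    have hmod : f k = f (k % T) := by
      conv_lhs => rw [← Nat.mod_add_div' k T]
      rw [hshift]
    rw [hmod]
    have hmem : k % T ∈ Finset.range T := Finset.mem_range.2 (Nat.mod_lt k (by omega))
    have hle : ‖f (k % T)‖ ≤ ∑ j ∈ Finset.range T, ‖f j‖ :=
      Finset.single_le_sum (fun j _ => norm_nonneg (f j)) hmem
    linarith

lemma mono_contract {T : ℕ} (hn : 0 < n) (hT : 1 ≤ T)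
    (Abar : ℕ → Matrix (Fin n) (Fin n) ℝ) (hper : ∀ k, Abar (k + T) = Abar k)
    (hstab : ∀ k, SchurStable (phiProd Abar k T)) :
    ∃ N : ℕ, ∃ θ : ℝ, 1 ≤ N ∧ 0 ≤ θ ∧ θ < 1 ∧ ∀ k, ‖phiProd Abar k N‖ ≤ θ := by
  choose mf hmf1 hmf2 using fun j => exists_pow_norm_lt_one hn _ (hstab j)
  set M := ∏ j ∈ Finset.range T, mf j with hM
  have hM1 : 1 ≤ M := Finset.one_le_prod' (fun j _ => hmf1 j)
  have hne : (Finset.range T).Nonempty := ⟨0, Finset.mem_range.2 (by omega)⟩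
  set θ := (Finset.range T).sup' hne (fun j => ‖(phiProd Abar j T) ^ (mf j)‖) with hθ
  obtain ⟨j0, hj0⟩ := id hne
  have hθ0 : 0 ≤ θ := le_trans (norm_nonneg ((phiProd Abar j0 T) ^ (mf j0)))
    (Finset.le_sup' (fun j => ‖(phiProd Abar j T) ^ (mf j)‖) hj0)
  have hθ1 : θ < 1 := by
    rw [hθ, Finset.sup'_lt_iff]
    intro j _
    exact hmf2 j
  refine ⟨M * T, θ, Nat.one_le_iff_ne_zero.2 (by positivity), hθ0, hθ1, ?_⟩
  intro k
  have h1 : phiProd Abar k (M * T) = (phiProd Abar k T) ^ M := phiProd_pow Abar T hper k M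
  have h2 : phiProd Abar k T = phiProd Abar (k % T) T := by
    conv_lhs => rw [← Nat.mod_add_div' k T]
    rw [phiProd_shift_mul Abar T hper (k % T) (k / T) T]
  have hjmem : k % T ∈ Finset.range T := Finset.mem_range.2 (Nat.mod_lt k (by omega))
  set j := k % T with hj
  have hdvd : mf j ∣ M := Finset.dvd_prod_of_mem mf hjmem
  obtain ⟨e, he⟩ := hdvd
  have he1 : 1 ≤ e := by
    rcases Nat.eq_zero_or_pos e with h0 | h0
    · subst h0; simp at he; omega
    · omega
  calc ‖phiProd Abar k (M * T)‖ = ‖((phiProd Abar j T) ^ (mf j)) ^ e‖ := by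
        rw [h1, h2, ← pow_mul, ← he]
    _ ≤ ‖(phiProd Abar j T) ^ (mf j)‖ ^ e := norm_pow_le' _ (by omega)
    _ ≤ θ ^ e := pow_le_pow_left₀ (norm_nonneg _) (Finset.le_sup' (fun j => ‖(phiProd Abar j T) ^ (mf j)‖) hjmem) e
    _ ≤ θ := pow_le_of_le_one hθ0 hθ1.le (by omega)

end S5aux

/-- a Lyapunov recursion whose coefficients converge to 𝒯-periodic ones with Schur
stable monodromy converges to the 𝒯-periodic solution of the limiting periodic Lyapunov
equation. -/
theorem statement5 {n T : ℕ} (hT : 1 ≤ T)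
    (A Abar Q Qbar : ℕ → Matrix (Fin n) (Fin n) ℝ)
    (hQsymm : ∀ k, (Q k).IsSymm)
    (hAconv : Tendsto (fun k => ‖A k - Abar k‖) atTop (nhds 0))
    (hQconv : Tendsto (fun k => ‖Q k - Qbar k‖) atTop (nhds 0))
    (hAbarPer : ∀ k, Abar (k + T) = Abar k)
    (hQbarPer : ∀ k, Qbar (k + T) = Qbar k)
    (hQbarSymm : ∀ k, (Qbar k).IsSymm)
    (hstab : ∀ k, SchurStable (phiProd Abar k T))
    (P Pbar : ℕ → Matrix (Fin n) (Fin n) ℝ)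
    (hP0 : (P 0).IsSymm)
    (hP : ∀ k, P (k + 1) = A k * P k * (A k)ᵀ + Q k)
    (hPbarPer : ∀ k, Pbar (k + T) = Pbar k)
    (hPbarSymm : ∀ k, (Pbar k).IsSymm)
    (hPbar : ∀ k, Pbar (k + 1) = Abar k * Pbar k * (Abar k)ᵀ + Qbar k) :
    Tendsto (fun k => P k - Pbar k) atTop (nhds 0) := by
  rcases Nat.eq_zero_or_pos n with hn0 | hn
  · subst hn0
    have hz : ∀ k, P k - Pbar k = (0 : Matrix (Fin 0) (Fin 0) ℝ) := by
      intro k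
      ext i j
      exact i.elim0
    simp only [hz]
    exact tendsto_const_nhds
  -- error and noise sequences
  set E := fun k => P k - Pbar k with hEdef
  set d := fun k => (A k - Abar k) * Pbar k * (A k)ᵀ
      + Abar k * Pbar k * ((A k)ᵀ - (Abar k)ᵀ) + (Q k - Qbar k) with hddef
  have hE : ∀ k, E (k + 1) = A k * E k * (A k)ᵀ + d k := by
    intro k
    show P (k + 1) - Pbar (k + 1) = _
    rw [hP, hPbar]
    simp only [hddef, hEdef]
    simp only [sub_mul, mul_sub]
    abel
  -- bounds from periodicity
  obtain ⟨Mb, hMb1, hMb⟩ := S5aux.periodic_norm_bound Abar T hT hAbarPer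
  obtain ⟨Pb, hPb1, hPb⟩ := S5aux.periodic_norm_bound Pbar T hT hPbarPer
  -- noise tends to zero
  have hdnorm : Tendsto (fun k => ‖d k‖) atTop (nhds 0) := by
    have hbd : ∀ k, ‖d k‖ ≤ ‖A k - Abar k‖ * Pb * (Mb + ‖A k - Abar k‖)
        + Mb * Pb * ‖A k - Abar k‖ + ‖Q k - Qbar k‖ := by
      intro k
      have hAk : ‖A k‖ ≤ Mb + ‖A k - Abar k‖ := by
        have h1 : A k = Abar k + (A k - Abar k) := by abel
        calc ‖A k‖ = ‖Abar k + (A k - Abar k)‖ := by rw [← h1]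
          _ ≤ ‖Abar k‖ + ‖A k - Abar k‖ := norm_add_le _ _
          _ ≤ Mb + ‖A k - Abar k‖ := by linarith [hMb k]
      have hAkT : ‖(A k)ᵀ‖ ≤ Mb + ‖A k - Abar k‖ := by
        rw [S5aux.norm_transpose]; exact hAk
      have hsubT : ‖(A k)ᵀ - (Abar k)ᵀ‖ = ‖A k - Abar k‖ := by
        rw [← Matrix.transpose_sub, S5aux.norm_transpose]
      have ht1 : ‖(A k - Abar k) * Pbar k * (A k)ᵀ‖
          ≤ ‖A k - Abar k‖ * Pb * (Mb + ‖A k - Abar k‖) := by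
        calc ‖(A k - Abar k) * Pbar k * (A k)ᵀ‖
            ≤ ‖(A k - Abar k) * Pbar k‖ * ‖(A k)ᵀ‖ := norm_mul_le _ _
          _ ≤ ‖A k - Abar k‖ * ‖Pbar k‖ * ‖(A k)ᵀ‖ :=
              mul_le_mul_of_nonneg_right (norm_mul_le _ _) (norm_nonneg _)
          _ ≤ ‖A k - Abar k‖ * Pb * (Mb + ‖A k - Abar k‖) := by
              have h0 : (0:ℝ) ≤ ‖A k - Abar k‖ := norm_nonneg _
              apply mul_le_mul (mul_le_mul_of_nonneg_left (hPb k) h0) hAkT (norm_nonneg _)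
                (mul_nonneg h0 (by linarith))
      have ht2 : ‖Abar k * Pbar k * ((A k)ᵀ - (Abar k)ᵀ)‖ ≤ Mb * Pb * ‖A k - Abar k‖ := by
        calc ‖Abar k * Pbar k * ((A k)ᵀ - (Abar k)ᵀ)‖
            ≤ ‖Abar k * Pbar k‖ * ‖(A k)ᵀ - (Abar k)ᵀ‖ := norm_mul_le _ _
          _ ≤ ‖Abar k‖ * ‖Pbar k‖ * ‖(A k)ᵀ - (Abar k)ᵀ‖ :=
              mul_le_mul_of_nonneg_right (norm_mul_le _ _) (norm_nonneg _)
          _ ≤ Mb * Pb * ‖A k - Abar k‖ := by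
              rw [hsubT]
              apply mul_le_mul_of_nonneg_right
                (mul_le_mul (hMb k) (hPb k) (norm_nonneg _) (by linarith)) (norm_nonneg _)
      refine le_trans (norm_add₃_le) ?_
      linarith
    have hg : Tendsto (fun k => ‖A k - Abar k‖ * Pb * (Mb + ‖A k - Abar k‖)
        + Mb * Pb * ‖A k - Abar k‖ + ‖Q k - Qbar k‖) atTop (nhds 0) := by
      have h1 := (hAconv.mul_const Pb).mul
        ((tendsto_const_nhds (x := Mb) (f := atTop (α := ℕ))).add hAconv)
      have h2 := hAconv.const_mul (Mb * Pb)
      have h3 := (h1.add h2).add hQconv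
      have h4 : (0 * Pb * (Mb + 0) + Mb * Pb * 0 + 0 : ℝ) = 0 := by ring
      rw [h4] at h3
      exact h3
    exact squeeze_zero (fun k => norm_nonneg _) hbd hg
  -- contraction of the nominal monodromy
  obtain ⟨N, θ, hN1, hθ0, hθ1, hmono⟩ := S5aux.mono_contract hn hT Abar hAbarPer hstab
  set Ma := Mb + 1 with hMadef
  have hMa1 : 1 ≤ Ma := by linarith
  set σ := (1 + θ) / 2 with hσdef
  have hσ0 : 0 < σ := by rw [hσdef]; linarith
  have hσ1 : σ < 1 := by rw [hσdef]; linarith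
  set δ := (1 - θ) / 2 with hδdef
  have hδ0 : 0 < δ := by rw [hδdef]; linarith
  have hMaN : (0:ℝ) < N * Ma ^ N := by positivity
  set δ' := min 1 (δ / (N * Ma ^ N)) with hδ'def
  have hδ'0 : 0 < δ' := by
    apply lt_min one_pos
    positivity
  obtain ⟨K, hK⟩ := eventually_atTop.1 (hAconv.eventually_lt_const hδ'0)
  have hAsmall : ∀ i, K ≤ i → ‖A i - Abar i‖ ≤ δ' := fun i hi => (hK i hi).le
  have hAno : ∀ i, K ≤ i → ‖A i‖ ≤ Ma := by
    intro i hi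
    have h1 : A i = Abar i + (A i - Abar i) := by abel
    calc ‖A i‖ = ‖Abar i + (A i - Abar i)‖ := by rw [← h1]
      _ ≤ ‖Abar i‖ + ‖A i - Abar i‖ := norm_add_le _ _
      _ ≤ Mb + 1 := add_le_add (hMb i) (le_trans (hAsmall i hi) (min_le_left _ _))
  have hAbarno : ∀ i, K ≤ i → ‖Abar i‖ ≤ Ma := fun i _ => by
    have := hMb i; rw [hMadef]; linarith
  have hblock : ∀ k, K ≤ k → ‖phiProd A k N‖ ≤ σ := by
    intro k hk
    have hdiff : ‖phiProd A k N - phiProd Abar k N‖ ≤ N * Ma ^ N * (δ / (N * Ma ^ N)) := by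
      refine S5aux.phiProd_diff A Abar k Ma (δ / (N * Ma ^ N)) hMa1 (by positivity)
        (fun i hi => hAno i (le_trans hk hi)) (fun i hi => hAbarno i (le_trans hk hi))
        (fun i hi => le_trans (hAsmall i (le_trans hk hi)) (min_le_right _ _)) N
    have heq : (N:ℝ) * Ma ^ N * (δ / (N * Ma ^ N)) = δ := by
      field_simp
    rw [heq] at hdiff
    have h1 : phiProd A k N = phiProd Abar k N + (phiProd A k N - phiProd Abar k N) := by abel
    calc ‖phiProd A k N‖ = ‖phiProd Abar k N + (phiProd A k N - phiProd Abar k N)‖ := by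
          rw [← h1]
      _ ≤ ‖phiProd Abar k N‖ + ‖phiProd A k N - phiProd Abar k N‖ := norm_add_le _ _
      _ ≤ θ + δ := add_le_add (hmono k) hdiff
      _ = σ := by rw [hσdef, hδdef]; ring
  have hqblock : ∀ k, K ≤ k → ∀ q, ‖phiProd A k (q * N)‖ ≤ σ ^ q := by
    intro k hk q
    induction q with
    | zero => simpa [Nat.zero_mul, phiProd] using S5aux.norm_one_le
    | succ q ih =>
        rw [show (q + 1) * N = q * N + N by ring, S5aux.phiProd_add]
        calc ‖phiProd A (k + q * N) N * phiProd A k (q * N)‖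
            ≤ ‖phiProd A (k + q * N) N‖ * ‖phiProd A k (q * N)‖ := norm_mul_le _ _
          _ ≤ σ * σ ^ q := mul_le_mul (hblock _ (by omega)) ih (norm_nonneg _) hσ0.le
          _ = σ ^ (q + 1) := (pow_succ' σ q).symm
  have hbound : ∀ k m, K ≤ k → ‖phiProd A k m‖ ≤ Ma ^ N * σ ^ (m / N) := by
    intro k m hk
    have hsplit : m = m / N * N + m % N := (Nat.div_add_mod' m N).symm
    have hre : phiProd A k m = phiProd A (k + m / N * N) (m % N) * phiProd A k (m / N * N) := by
      conv_lhs => rw [hsplit]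
      rw [S5aux.phiProd_add]
    rw [hre]
    calc ‖phiProd A (k + m / N * N) (m % N) * phiProd A k (m / N * N)‖
        ≤ ‖phiProd A (k + m / N * N) (m % N)‖ * ‖phiProd A k (m / N * N)‖ := norm_mul_le _ _
      _ ≤ Ma ^ (m % N) * σ ^ (m / N) := by
          apply mul_le_mul (S5aux.phiProd_norm_le A _ Ma hMa1
            (fun i hi => hAno i (by omega)) (m % N)) (hqblock k hk (m / N)) (norm_nonneg _)
            (by positivity)
      _ ≤ Ma ^ N * σ ^ (m / N) := by
          apply mul_le_mul_of_nonneg_right _ (by positivity)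
          exact pow_le_pow_right₀ hMa1 (Nat.mod_lt m (by omega)).le
  have hCN : (1:ℝ) ≤ Ma ^ N := by
    calc (1:ℝ) = 1 ^ N := by simp
      _ ≤ Ma ^ N := pow_le_pow_left₀ zero_le_one hMa1 N
  exact S5aux.core A E d hE (Ma ^ N) σ hCN hσ0 hσ1 N hN1 K hbound hdnorm
end

section
/- Let Ā_k ∈ ℝ^{n×n} be a 𝒯-periodic sequence whose monodromy matrix Φ̄_k = Ā_{k+𝒯−1}···Ā_k is Schur stable for every k, and let Q̄_k be a 𝒯-periodic sequence of symmetric positive semidefinite matrices. Then there exists a unique 𝒯-periodic sequence of symmetric matrices P̄_· satisfying the discrete-time periodic Lyapunov equation P̄_{k+1} = Ā_k P̄_k Ā_kᵀ + Q̄_k for all k, and every P̄_k is positive semidefinite. -/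
open Matrix

open Filter Topology
open scoped NNReal

lemma aux_norm_pow_tendsto {A : Type*} [NormedRing A] [NormedAlgebra ℂ A] [CompleteSpace A]
    (a : A) (h : spectralRadius ℂ a < 1) :
    Tendsto (fun m : ℕ => ‖a ^ m‖) atTop (𝓝 0) := by
  obtain ⟨r, hr1, hr2⟩ := ENNReal.lt_iff_exists_nnreal_btwn.mp h
  have hgel := spectrum.pow_nnnorm_pow_one_div_tendsto_nhds_spectralRadius a
  have hev : ∀ᶠ m : ℕ in atTop, (‖a ^ m‖₊ : ENNReal) ^ (1 / (m : ℝ)) < (r : ENNReal) :=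
    hgel.eventually_lt_const hr1
  have hev2 : ∀ᶠ m : ℕ in atTop, ‖a ^ m‖ ≤ (r : ℝ) ^ m := by
    filter_upwards [hev, eventually_ge_atTop 1] with m hm hm1
    have hm0 : (m : ℝ) ≠ 0 := by positivity
    have : ((‖a ^ m‖₊ : ENNReal) ^ (1 / (m : ℝ))) ^ (m : ℝ) ≤ ((r : ENNReal)) ^ (m : ℝ) :=
      ENNReal.rpow_le_rpow hm.le (by positivity)
    rw [← ENNReal.rpow_mul, one_div, inv_mul_cancel₀ hm0, ENNReal.rpow_one,
      ENNReal.rpow_natCast, ← ENNReal.coe_pow, ENNReal.coe_le_coe] at this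
    have h2 := NNReal.coe_le_coe.mpr this
    simpa [← NNReal.coe_pow, coe_nnnorm] using h2
  have hrlt : (r : ℝ) < 1 := by exact_mod_cast hr2
  have hpow : Tendsto (fun m : ℕ => (r : ℝ) ^ m) atTop (𝓝 0) :=
    tendsto_pow_atTop_nhds_zero_of_lt_one r.coe_nonneg hrlt
  exact squeeze_zero' (Eventually.of_forall fun m => norm_nonneg _) hev2 hpow

open Matrix

attribute [local instance] Matrix.linftyOpNormedRing Matrix.linftyOpNormedAlgebra

lemma entry_tendsto_zero {n : ℕ} {Φ : Matrix (Fin n) (Fin n) ℝ} (hΦ : SchurStable Φ)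
    (i j : Fin n) : Tendsto (fun m : ℕ => (Φ ^ m) i j) atTop (𝓝 0) := by
  set a : Matrix (Fin n) (Fin n) ℂ := Φ.map (algebraMap ℝ ℂ) with ha
  have hrad : spectralRadius ℂ a < 1 := by
    rcases Set.eq_empty_or_nonempty (spectrum ℂ a) with he | hne
    · rw [spectralRadius]
      simp [he]
    · have := spectrum.spectralRadius_lt_of_forall_lt_of_nonempty hne
        (r := 1) (fun z hz => ?_)
      · simpa using this
      · have := hΦ z hz
        exact_mod_cast this
  haveI : CompleteSpace (Matrix (Fin n) (Fin n) ℂ) := FiniteDimensional.complete ℂ _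
  have hnorm := aux_norm_pow_tendsto a hrad
  have hmap : ∀ m : ℕ, a ^ m = (Φ ^ m).map (algebraMap ℝ ℂ) := by
    intro m
    rw [ha, ← RingHom.mapMatrix_apply, ← RingHom.mapMatrix_apply, ← map_pow]
  have hbound : ∀ m : ℕ, ‖(Φ ^ m) i j‖ ≤ ‖a ^ m‖ := by
    intro m
    have h1 : ‖(a ^ m) i j‖₊ ≤ ‖a ^ m‖₊ := by
      rw [Matrix.linfty_opNNNorm_def]
      calc ‖(a ^ m) i j‖₊ ≤ ∑ j', ‖(a ^ m) i j'‖₊ :=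
            Finset.single_le_sum (f := fun j' => ‖(a ^ m) i j'‖₊) (fun _ _ => zero_le) (Finset.mem_univ j)
        _ ≤ _ := Finset.le_sup (f := fun i => ∑ j', ‖(a ^ m) i j'‖₊) (Finset.mem_univ i)
    have h2 : ‖(a ^ m) i j‖ = ‖(Φ ^ m) i j‖ := by
      rw [hmap m]
      simp [Matrix.map_apply, Complex.norm_real]
    calc ‖(Φ ^ m) i j‖ = ‖(a ^ m) i j‖ := h2.symm
      _ ≤ ‖a ^ m‖ := h1
  exact squeeze_zero_norm hbound hnorm

lemma sandwich_tendsto_zero {n : ℕ} {Φ : Matrix (Fin n) (Fin n) ℝ} (hΦ : SchurStable Φ)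
    (X : Matrix (Fin n) (Fin n) ℝ) (i j : Fin n) :
    Tendsto (fun m : ℕ => (Φ ^ m * X * (Φ ^ m)ᵀ) i j) atTop (𝓝 0) := by
  have hent := entry_tendsto_zero hΦ
  have : ∀ m : ℕ, (Φ ^ m * X * (Φ ^ m)ᵀ) i j
      = ∑ q, (∑ p, (Φ ^ m) i p * X p q) * (Φ ^ m) j q := by
    intro m
    simp only [Matrix.mul_apply, Matrix.transpose_apply]
  simp only [this]
  have := tendsto_finset_sum (Finset.univ : Finset (Fin n)) (fun q _ =>
    ((tendsto_finset_sum (Finset.univ : Finset (Fin n)) (fun p _ =>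
      (hent i p).mul_const (X p q))).mul (hent j q)))
  simpa using this

noncomputable def lyapLin {n : ℕ} (Φ : Matrix (Fin n) (Fin n) ℝ) :
    Matrix (Fin n) (Fin n) ℝ →ₗ[ℝ] Matrix (Fin n) (Fin n) ℝ where
  toFun X := X - Φ * X * Φᵀ
  map_add' X Y := by
    simp [Matrix.mul_add, Matrix.add_mul]
    abel
  map_smul' c X := by
    simp [Matrix.mul_smul, Matrix.smul_mul, smul_sub]

lemma lyap_fix_unique {n : ℕ} {Φ : Matrix (Fin n) (Fin n) ℝ} (hΦ : SchurStable Φ)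
    {X : Matrix (Fin n) (Fin n) ℝ} (hX : X = Φ * X * Φᵀ) : X = 0 := by
  have hiter : ∀ m : ℕ, X = Φ ^ m * X * (Φ ^ m)ᵀ := by
    intro m
    induction m with
    | zero => simp
    | succ m ih =>
      calc X = Φ * X * Φᵀ := hX
        _ = Φ * (Φ ^ m * X * (Φ ^ m)ᵀ) * Φᵀ := by rw [← ih]
        _ = Φ ^ (m + 1) * X * (Φ ^ (m + 1))ᵀ := by
            rw [pow_succ']
            simp [Matrix.transpose_mul, Matrix.mul_assoc]
  ext i j
  have h1 : Tendsto (fun m : ℕ => (Φ ^ m * X * (Φ ^ m)ᵀ) i j) atTop (𝓝 0) :=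
    sandwich_tendsto_zero hΦ X i j
  have h2 : (fun m : ℕ => (Φ ^ m * X * (Φ ^ m)ᵀ) i j) = fun _ => X i j := by
    funext m; rw [← hiter m]
  rw [h2] at h1
  simpa using (tendsto_nhds_unique h1 tendsto_const_nhds).symm

lemma lyap_exists {n : ℕ} {Φ : Matrix (Fin n) (Fin n) ℝ} (hΦ : SchurStable Φ)
    (S : Matrix (Fin n) (Fin n) ℝ) :
    ∃ X : Matrix (Fin n) (Fin n) ℝ, X = Φ * X * Φᵀ + S := by
  have hinj : Function.Injective (lyapLin Φ) := by
    rw [injective_iff_map_eq_zero]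
    intro X hX0
    have : X - Φ * X * Φᵀ = 0 := hX0
    exact lyap_fix_unique hΦ (by linear_combination (norm := module) this)
  have hsurj : Function.Surjective (lyapLin Φ) :=
    (LinearMap.injective_iff_surjective).mp hinj
  obtain ⟨X, hX⟩ := hsurj S
  exact ⟨X, by have : X - Φ * X * Φᵀ = S := hX; linear_combination (norm := module) this⟩

lemma isSymm_of_trivial {n : ℕ} {M : Matrix (Fin n) (Fin n) ℝ} (h : M.IsSymm) :
    M.IsHermitian := by
  rwa [Matrix.IsHermitian, Matrix.conjTranspose_eq_transpose_of_trivial]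

lemma hermitian_isSymm {n : ℕ} {M : Matrix (Fin n) (Fin n) ℝ} (h : M.IsHermitian) :
    M.IsSymm := by
  rwa [Matrix.IsHermitian, Matrix.conjTranspose_eq_transpose_of_trivial] at h

lemma psd_congr {n : ℕ} {S : Matrix (Fin n) (Fin n) ℝ} (hS : S.PosSemidef)
    (B : Matrix (Fin n) (Fin n) ℝ) : (B * S * Bᵀ).PosSemidef := by
  have := hS.mul_mul_conjTranspose_same B
  rwa [Matrix.conjTranspose_eq_transpose_of_trivial] at this

lemma lyap_symm {n : ℕ} {Φ X S : Matrix (Fin n) (Fin n) ℝ} (hΦ : SchurStable Φ)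
    (hS : S.IsSymm) (hX : X = Φ * X * Φᵀ + S) : X.IsSymm := by
  have hXT : Xᵀ = Φ * Xᵀ * Φᵀ + S := by
    conv_lhs => rw [hX]
    rw [Matrix.transpose_add, Matrix.transpose_mul, Matrix.transpose_mul,
      Matrix.transpose_transpose, hS.eq]
    rw [Matrix.mul_assoc]
  have hD : X - Xᵀ = Φ * (X - Xᵀ) * Φᵀ := by
    calc X - Xᵀ = (Φ * X * Φᵀ + S) - (Φ * Xᵀ * Φᵀ + S) := by rw [← hX, ← hXT]
      _ = Φ * (X - Xᵀ) * Φᵀ := by rw [Matrix.mul_sub, Matrix.sub_mul]; abel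
  have := lyap_fix_unique hΦ hD
  rw [Matrix.IsSymm, ← sub_eq_zero]
  rw [sub_eq_zero] at *
  exact this.symm

lemma quad_tendsto_zero {n : ℕ} {Φ : Matrix (Fin n) (Fin n) ℝ} (hΦ : SchurStable Φ)
    (X : Matrix (Fin n) (Fin n) ℝ) (x : Fin n → ℝ) :
    Tendsto (fun N : ℕ => x ⬝ᵥ (Φ ^ N * X * (Φ ^ N)ᵀ) *ᵥ x) atTop (𝓝 0) := by
  have hent := sandwich_tendsto_zero hΦ X
  have hexp : ∀ N : ℕ, x ⬝ᵥ (Φ ^ N * X * (Φ ^ N)ᵀ) *ᵥ x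
      = ∑ i, x i * ∑ j, (Φ ^ N * X * (Φ ^ N)ᵀ) i j * x j := by
    intro N
    simp only [dotProduct, Matrix.mulVec, dotProduct]
  simp only [hexp]
  have := tendsto_finset_sum (Finset.univ : Finset (Fin n)) (fun i _ =>
    (tendsto_finset_sum (Finset.univ : Finset (Fin n)) (fun j _ =>
      (hent i j).mul_const (x j))).const_mul (x i))
  simpa using this

lemma lyap_psd {n : ℕ} {Φ X S : Matrix (Fin n) (Fin n) ℝ} (hΦ : SchurStable Φ)
    (hS : S.PosSemidef) (hXsym : X.IsSymm) (hX : X = Φ * X * Φᵀ + S) : X.PosSemidef := by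
  refine Matrix.PosSemidef.of_dotProduct_mulVec_nonneg (isSymm_of_trivial hXsym) fun x => ?_
  set T : ℕ → Matrix (Fin n) (Fin n) ℝ :=
    fun N => ∑ m ∈ Finset.range N, Φ ^ m * S * (Φ ^ m)ᵀ with hT
  have hiter : ∀ N, X = Φ ^ N * X * (Φ ^ N)ᵀ + T N := by
    intro N
    induction N with
    | zero => simp [hT]
    | succ N ih =>
      have step : Φ ^ N * X * (Φ ^ N)ᵀ
          = Φ ^ (N + 1) * X * (Φ ^ (N + 1))ᵀ + Φ ^ N * S * (Φ ^ N)ᵀ := by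
        conv_lhs => rw [hX]
        rw [pow_succ]
        simp only [Matrix.transpose_mul, Matrix.mul_add, Matrix.add_mul, Matrix.mul_assoc]
      simp only [hT, Finset.sum_range_succ]
      calc X = Φ ^ N * X * (Φ ^ N)ᵀ + T N := ih
        _ = Φ ^ (N + 1) * X * (Φ ^ (N + 1))ᵀ + (T N + Φ ^ N * S * (Φ ^ N)ᵀ) := by
            rw [step]; abel
  have hTpsd : ∀ N, (T N).PosSemidef := by
    intro N
    induction N with
    | zero => simpa [hT] using (Matrix.PosSemidef.zero (n := Fin n) (R := ℝ))
    | succ N ih =>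
      simp only [hT, Finset.sum_range_succ]
      exact ih.add (psd_congr hS (Φ ^ N))
  have hdecomp : ∀ N, x ⬝ᵥ X *ᵥ x
      = x ⬝ᵥ (Φ ^ N * X * (Φ ^ N)ᵀ) *ᵥ x + x ⬝ᵥ (T N) *ᵥ x := by
    intro N
    conv_lhs => rw [hiter N]
    rw [Matrix.add_mulVec, dotProduct_add]
  have hlim : Tendsto (fun N => x ⬝ᵥ (T N) *ᵥ x) atTop (𝓝 (x ⬝ᵥ X *ᵥ x)) := by
    have h1 : (fun N => x ⬝ᵥ (T N) *ᵥ x)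
        = fun N => x ⬝ᵥ X *ᵥ x - x ⬝ᵥ (Φ ^ N * X * (Φ ^ N)ᵀ) *ᵥ x := by
      funext N
      rw [hdecomp N]; ring
    rw [h1]
    simpa using tendsto_const_nhds.sub (quad_tendsto_zero hΦ X x)
  have hge : ∀ N, (0 : ℝ) ≤ x ⬝ᵥ (T N) *ᵥ x := by
    intro N
    simpa [star_trivial] using (hTpsd N).dotProduct_mulVec_nonneg x
  have := ge_of_tendsto' hlim hge
  simpa [star_trivial] using this

lemma symm_step {n : ℕ} {A P Q : Matrix (Fin n) (Fin n) ℝ} (hP : P.IsSymm) (hQ : Q.IsSymm) :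
    (A * P * Aᵀ + Q).IsSymm := by
  rw [Matrix.IsSymm] at *
  rw [Matrix.transpose_add, Matrix.transpose_mul, Matrix.transpose_mul,
    Matrix.transpose_transpose, hP, hQ, Matrix.mul_assoc]


/-- if the 𝒯-periodic sequence `Ā_·` has Schur stable monodromy matrices and
`Q̄_·` is 𝒯-periodic symmetric positive semidefinite, then the discrete-time periodic Lyapunov
equation `P̄_{k+1} = Ā_k P̄_k Ā_kᵀ + Q̄_k` has a unique 𝒯-periodic symmetric solution, and
this solution is positive semidefinite. -/
theorem statement6 {n T : ℕ} (hT : 1 ≤ T)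
    (Abar Qbar : ℕ → Matrix (Fin n) (Fin n) ℝ)
    (hAbarPer : ∀ k, Abar (k + T) = Abar k)
    (hQbarPer : ∀ k, Qbar (k + T) = Qbar k)
    (hQbarPSD : ∀ k, (Qbar k).PosSemidef)
    (hstab : ∀ k, SchurStable (phiProd Abar k T)) :
    ∃ P : ℕ → Matrix (Fin n) (Fin n) ℝ,
      ((∀ k, P (k + T) = P k) ∧ (∀ k, (P k).IsSymm) ∧
        (∀ k, P (k + 1) = Abar k * P k * (Abar k)ᵀ + Qbar k) ∧
        (∀ k, (P k).PosSemidef)) ∧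
      ∀ Y : ℕ → Matrix (Fin n) (Fin n) ℝ,
        (∀ k, Y (k + T) = Y k) → (∀ k, (Y k).IsSymm) →
        (∀ k, Y (k + 1) = Abar k * Y k * (Abar k)ᵀ + Qbar k) → Y = P := by
  classical
  -- the inhomogeneous part accumulated over one period
  set C : ℕ → Matrix (Fin n) (Fin n) ℝ :=
    fun h => Nat.rec 0 (fun h Ch => Abar h * Ch * (Abar h)ᵀ + Qbar h) h with hC
  have hCs : ∀ h, C (h + 1) = Abar h * C h * (Abar h)ᵀ + Qbar h := fun _ => rfl
  have hCpsd : ∀ h, (C h).PosSemidef := by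
    intro h
    induction h with
    | zero => exact Matrix.PosSemidef.zero
    | succ h ih => rw [hCs]; exact (psd_congr ih (Abar h)).add (hQbarPSD h)
  have hCsym : ∀ h, (C h).IsSymm := fun h => hermitian_isSymm (hCpsd h).1
  obtain ⟨X0, hX0⟩ := lyap_exists (hstab 0) (C T)
  set P : ℕ → Matrix (Fin n) (Fin n) ℝ :=
    fun k => Nat.rec X0 (fun k Pk => Abar k * Pk * (Abar k)ᵀ + Qbar k) k with hP
  have hPs : ∀ k, P (k + 1) = Abar k * P k * (Abar k)ᵀ + Qbar k := fun _ => rfl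
  have hP0 : P 0 = X0 := rfl
  -- affine expansion of the recursion
  have hexp : ∀ h, P h = phiProd Abar 0 h * X0 * (phiProd Abar 0 h)ᵀ + C h := by
    intro h
    induction h with
    | zero => simp [phiProd, hP0, show C 0 = 0 from rfl]
    | succ h ih =>
      rw [hPs, ih, hCs]
      show _ = phiProd Abar 0 (h + 1) * X0 * (phiProd Abar 0 (h + 1))ᵀ + _
      simp only [phiProd, zero_add]
      simp only [Matrix.transpose_mul, Matrix.mul_add, Matrix.add_mul, Matrix.mul_assoc]
      abel
  have hPT : P T = X0 := by rw [hexp T, ← hX0]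
  -- symmetry and positive semidefiniteness
  have hX0sym : X0.IsSymm := lyap_symm (hstab 0) (hCsym T) hX0
  have hX0psd : X0.PosSemidef := lyap_psd (hstab 0) (hCpsd T) hX0sym hX0
  have hPpsd : ∀ k, (P k).PosSemidef := by
    intro k
    induction k with
    | zero => exact hX0psd
    | succ k ih => rw [hPs]; exact (psd_congr ih (Abar k)).add (hQbarPSD k)
  have hPsym : ∀ k, (P k).IsSymm := fun k => hermitian_isSymm (hPpsd k).1
  -- periodicity
  have hPer : ∀ k, P (k + T) = P k := by
    intro k
    induction k with
    | zero => rw [zero_add, hPT, hP0]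
    | succ k ih =>
      have he : k + 1 + T = (k + T) + 1 := by omega
      rw [he, hPs, hPs, ih, hAbarPer, hQbarPer]
  refine ⟨P, ⟨hPer, hPsym, hPs, hPpsd⟩, ?_⟩
  -- uniqueness
  intro Y hYper _hYsym hYrec
  funext k
  have hdh : ∀ h, Y (k + h) - P (k + h)
      = phiProd Abar k h * (Y k - P k) * (phiProd Abar k h)ᵀ := by
    intro h
    induction h with
    | zero => simp [phiProd]
    | succ h ih =>
      have he : k + (h + 1) = (k + h) + 1 := rfl
      rw [he, hYrec, hPs]
      show _ = phiProd Abar k (h + 1) * (Y k - P k) * (phiProd Abar k (h + 1))ᵀ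
      simp only [phiProd]
      calc Abar (k + h) * Y (k + h) * (Abar (k + h))ᵀ + Qbar (k + h)
          - (Abar (k + h) * P (k + h) * (Abar (k + h))ᵀ + Qbar (k + h))
          = Abar (k + h) * (Y (k + h) - P (k + h)) * (Abar (k + h))ᵀ := by
            rw [Matrix.mul_sub, Matrix.sub_mul]; abel
        _ = Abar (k + h) * (phiProd Abar k h * (Y k - P k) * (phiProd Abar k h)ᵀ)
            * (Abar (k + h))ᵀ := by rw [ih]
        _ = Abar (k + h) * phiProd Abar k h * (Y k - P k)
            * (Abar (k + h) * phiProd Abar k h)ᵀ := by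
            simp only [Matrix.transpose_mul, Matrix.mul_assoc]
  have hfix : Y k - P k = phiProd Abar k T * (Y k - P k) * (phiProd Abar k T)ᵀ := by
    have := hdh T
    rwa [hYper, hPer] at this
  have := lyap_fix_unique (hstab k) hfix
  rw [sub_eq_zero] at this
  exact this
end

section
/- Let A_k ∈ ℝ^{n×n}, C_k ∈ ℝ^{m×n}, symmetric positive semidefinite Q_k ∈ ℝ^{n×n} and symmetric positive definite R_{1,k}, R_{2,k} ∈ ℝ^{m×m} be given with R_{1,k} ≥ R_{2,k} for all k. For j = 1, 2, define the Riccati recursions P̄_{j,k+1} = A_k P̄_{j,k} A_kᵀ + Q_k − A_k P̄_{j,k} C_kᵀ (C_k P̄_{j,k} C_kᵀ + R_{j,k})^{−1} C_k P̄_{j,k} A_kᵀ with symmetric positive definite initial values satisfying P̄_{1,0} ≥ P̄_{2,0}. Then P̄_{1,k} ≥ P̄_{2,k} (Loewner order) for all k ∈ ℕ; consequently, if for j = 1, 2 the recursion converges to a 𝒯-periodic SPPS solution P_{j,·} of the corresponding DPRE, then P_{1,k} ≥ P_{2,k} for all k. -/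
open Matrix Filter

/-- The Riccati update map `P ↦ A P Aᵀ + Q − A P Cᵀ (C P Cᵀ + R)⁻¹ C P Aᵀ`. -/
noncomputable def riccatiMap {n : ℕ} {p : Type} [Fintype p] [DecidableEq p]
    (A : Matrix (Fin n) (Fin n) ℝ) (C : Matrix p (Fin n) ℝ)
    (Q : Matrix (Fin n) (Fin n) ℝ) (R : Matrix p p ℝ)
    (P : Matrix (Fin n) (Fin n) ℝ) : Matrix (Fin n) (Fin n) ℝ :=
  A * P * Aᵀ + Q - A * P * Cᵀ * (C * P * Cᵀ + R)⁻¹ * (C * P * Aᵀ)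

/-- An SPPS (symmetric periodic positive semidefinite) solution of the DPRE with
𝒯-periodic data. -/
def IsSPPS {n : ℕ} {p : Type} [Fintype p] [DecidableEq p] (T : ℕ)
    (A : ℕ → Matrix (Fin n) (Fin n) ℝ) (C : ℕ → Matrix p (Fin n) ℝ)
    (Q : ℕ → Matrix (Fin n) (Fin n) ℝ) (R : ℕ → Matrix p p ℝ)
    (P : ℕ → Matrix (Fin n) (Fin n) ℝ) : Prop :=
  (∀ k, P (k + T) = P k) ∧ (∀ k, (P k).PosSemidef) ∧
    ∀ k, P (k + 1) = riccatiMap (A k) (C k) (Q k) (R k) (P k)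

lemma tr_eq {k : ℕ} {M : Matrix (Fin k) (Fin k) ℝ} (h : M.IsHermitian) : Mᵀ = M := by
  simpa [Matrix.conjTranspose_eq_transpose_of_trivial] using h.eq

lemma psd_conj {k l : ℕ} {M : Matrix (Fin k) (Fin k) ℝ} (hM : M.PosSemidef)
    (B : Matrix (Fin l) (Fin k) ℝ) : (B * M * Bᵀ).PosSemidef := by
  simpa [Matrix.conjTranspose_eq_transpose_of_trivial] using hM.mul_mul_conjTranspose_same B

/-- Square-completion identity for the Riccati map. -/
lemma riccati_eq {n m : ℕ} (A P Q : Matrix (Fin n) (Fin n) ℝ) (C : Matrix (Fin m) (Fin n) ℝ)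
    (R : Matrix (Fin m) (Fin m) ℝ) (hP : Pᵀ = P) (hR : Rᵀ = R)
    (hS : IsUnit (C * P * Cᵀ + R).det) (K : Matrix (Fin n) (Fin m) ℝ) :
    riccatiMap A C Q R P =
      (A - K * C) * P * (A - K * C)ᵀ + K * R * Kᵀ + Q -
        (K - A * P * Cᵀ * (C * P * Cᵀ + R)⁻¹) * (C * P * Cᵀ + R) *
          (K - A * P * Cᵀ * (C * P * Cᵀ + R)⁻¹)ᵀ := by
  unfold riccatiMap
  generalize hg : C * P * Cᵀ + R = S at hS ⊢
  have hSt : Sᵀ = S := by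
    rw [← hg]; simp [transpose_add, transpose_mul, hP, hR, Matrix.mul_assoc]
  have hSit : (S⁻¹)ᵀ = S⁻¹ := by rw [transpose_nonsing_inv, hSt]
  have h1 : ∀ (x : Matrix (Fin m) (Fin n) ℝ), S * (S⁻¹ * x) = x := by
    intro x; rw [← Matrix.mul_assoc, Matrix.mul_nonsing_inv _ hS, Matrix.one_mul]
  have h2 : ∀ (x : Matrix (Fin m) (Fin n) ℝ), S⁻¹ * (S * x) = x := by
    intro x; rw [← Matrix.mul_assoc, Matrix.nonsing_inv_mul _ hS, Matrix.one_mul]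
  have h3 : ∀ (x : Matrix (Fin m) (Fin n) ℝ), C * (P * (Cᵀ * x)) = S * x - R * x := by
    intro x; rw [← hg]; simp [Matrix.add_mul, Matrix.mul_assoc]
  simp only [Matrix.sub_mul, Matrix.mul_sub, Matrix.add_mul, Matrix.mul_add,
    transpose_sub, transpose_mul, transpose_transpose, hP, hSit, Matrix.mul_assoc, h1, h2, h3]
  abel

lemma S_posDef {n m : ℕ} {P : Matrix (Fin n) (Fin n) ℝ} {R : Matrix (Fin m) (Fin m) ℝ}
    (C : Matrix (Fin m) (Fin n) ℝ) (hP : P.PosSemidef) (hR : R.PosDef) :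
    (C * P * Cᵀ + R).PosDef :=
  Matrix.PosDef.posSemidef_add (psd_conj hP C) hR

lemma S_isUnit_det {n m : ℕ} {P : Matrix (Fin n) (Fin n) ℝ} {R : Matrix (Fin m) (Fin m) ℝ}
    (C : Matrix (Fin m) (Fin n) ℝ) (hP : P.PosSemidef) (hR : R.PosDef) :
    IsUnit (C * P * Cᵀ + R).det :=
  (Matrix.isUnit_iff_isUnit_det _).mp (S_posDef C hP hR).isUnit

/-- The Riccati map preserves positive semidefiniteness. -/
lemma riccati_psd {n m : ℕ} (A Q : Matrix (Fin n) (Fin n) ℝ) (C : Matrix (Fin m) (Fin n) ℝ)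
    {R : Matrix (Fin m) (Fin m) ℝ} {P : Matrix (Fin n) (Fin n) ℝ}
    (hP : P.PosSemidef) (hQ : Q.PosSemidef) (hR : R.PosDef) :
    (riccatiMap A C Q R P).PosSemidef := by
  rw [riccati_eq A P Q C R (tr_eq hP.isHermitian) (tr_eq hR.isHermitian)
    (S_isUnit_det C hP hR) (A * P * Cᵀ * (C * P * Cᵀ + R)⁻¹)]
  simp only [sub_self, Matrix.zero_mul, Matrix.mul_zero, sub_zero]
  exact ((psd_conj hP _).add (psd_conj hR.posSemidef _)).add hQ

/-- Monotonicity of the Riccati map in `(P, R)`. -/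
lemma riccati_mono {n m : ℕ} (A Q : Matrix (Fin n) (Fin n) ℝ) (C : Matrix (Fin m) (Fin n) ℝ)
    {R₁ R₂ : Matrix (Fin m) (Fin m) ℝ} {P₁ P₂ : Matrix (Fin n) (Fin n) ℝ}
    (hP₁ : P₁.PosSemidef) (hP₂ : P₂.PosSemidef) (hPd : (P₁ - P₂).PosSemidef)
    (hR₁ : R₁.PosDef) (hR₂ : R₂.PosDef) (hRd : (R₁ - R₂).PosSemidef) :
    (riccatiMap A C Q R₁ P₁ - riccatiMap A C Q R₂ P₂).PosSemidef := by
  set K := A * P₁ * Cᵀ * (C * P₁ * Cᵀ + R₁)⁻¹ with hK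
  rw [riccati_eq A P₁ Q C R₁ (tr_eq hP₁.isHermitian) (tr_eq hR₁.isHermitian)
      (S_isUnit_det C hP₁ hR₁) K,
    riccati_eq A P₂ Q C R₂ (tr_eq hP₂.isHermitian) (tr_eq hR₂.isHermitian)
      (S_isUnit_det C hP₂ hR₂) K,
    sub_self K, Matrix.transpose_zero, Matrix.zero_mul, Matrix.mul_zero, sub_zero]
  set S₂ := C * P₂ * Cᵀ + R₂ with hS₂
  set L := K - A * P₂ * Cᵀ * S₂⁻¹ with hL
  have heq : (A - K * C) * P₁ * (A - K * C)ᵀ + K * R₁ * Kᵀ + Q -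
      ((A - K * C) * P₂ * (A - K * C)ᵀ + K * R₂ * Kᵀ + Q - L * S₂ * Lᵀ) =
      (A - K * C) * (P₁ - P₂) * (A - K * C)ᵀ + K * (R₁ - R₂) * Kᵀ + L * S₂ * Lᵀ := by
    simp only [Matrix.mul_sub, Matrix.sub_mul]
    abel
  rw [heq]
  exact ((psd_conj hPd _).add (psd_conj hRd _)).add
    (psd_conj (S_posDef C hP₂ hR₂).posSemidef _)

lemma psd_of_tendsto {k : ℕ} {f : ℕ → Matrix (Fin k) (Fin k) ℝ} {M : Matrix (Fin k) (Fin k) ℝ}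
    (hM : M.IsHermitian) (h : Tendsto f atTop (nhds M)) (hf : ∀ j, (f j).PosSemidef) :
    M.PosSemidef := by
  refine Matrix.PosSemidef.of_dotProduct_mulVec_nonneg hM fun x => ?_
  have hc : Continuous fun N : Matrix (Fin k) (Fin k) ℝ => dotProduct (star x) (N *ᵥ x) := by
    have : Continuous fun N : Matrix (Fin k) (Fin k) ℝ =>
        ∑ i, (star x i) * ∑ j, N i j * x j :=
      continuous_finset_sum _ fun i _ => continuous_const.mul
        (continuous_finset_sum _ fun j _ =>
          (continuous_id.matrix_elem i j).mul continuous_const)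
    simpa [dotProduct, Matrix.mulVec] using this
  exact le_of_tendsto_of_tendsto tendsto_const_nhds ((hc.tendsto M).comp h)
    (Eventually.of_forall fun j => (hf j).dotProduct_mulVec_nonneg x)

/-- the Riccati recursion is monotone in the measurement-noise covariance:
if `R₁ ≥ R₂ > 0` and `P̄₁,₀ ≥ P̄₂,₀ > 0`, then `P̄₁,k ≥ P̄₂,k` for all `k`; consequently, if
the two recursions converge to 𝒯-periodic SPPS solutions of the corresponding DPREs, those
solutions are ordered as well. -/
theorem statement7 {n m T : ℕ} (hT : 1 ≤ T)
    (A : ℕ → Matrix (Fin n) (Fin n) ℝ) (C : ℕ → Matrix (Fin m) (Fin n) ℝ)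
    (Q : ℕ → Matrix (Fin n) (Fin n) ℝ) (hQ : ∀ k, (Q k).PosSemidef)
    (R₁ R₂ : ℕ → Matrix (Fin m) (Fin m) ℝ)
    (hR₁ : ∀ k, (R₁ k).PosDef) (hR₂ : ∀ k, (R₂ k).PosDef)
    (hR : ∀ k, (R₁ k - R₂ k).PosSemidef)
    (P₁ P₂ : ℕ → Matrix (Fin n) (Fin n) ℝ)
    (hP₁0 : (P₁ 0).PosDef) (hP₂0 : (P₂ 0).PosDef)
    (h0 : (P₁ 0 - P₂ 0).PosSemidef)
    (hP₁ : ∀ k, P₁ (k + 1) = riccatiMap (A k) (C k) (Q k) (R₁ k) (P₁ k))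
    (hP₂ : ∀ k, P₂ (k + 1) = riccatiMap (A k) (C k) (Q k) (R₂ k) (P₂ k)) :
    (∀ k, (P₁ k - P₂ k).PosSemidef) ∧
    ∀ Ps₁ Ps₂ : ℕ → Matrix (Fin n) (Fin n) ℝ,
      IsSPPS T A C Q R₁ Ps₁ → IsSPPS T A C Q R₂ Ps₂ →
      Tendsto (fun k => P₁ k - Ps₁ k) atTop (nhds 0) →
      Tendsto (fun k => P₂ k - Ps₂ k) atTop (nhds 0) →
      ∀ k, (Ps₁ k - Ps₂ k).PosSemidef := by
  have key : ∀ k, (P₁ k - P₂ k).PosSemidef ∧ (P₁ k).PosSemidef ∧ (P₂ k).PosSemidef := by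
    intro k
    induction k with
    | zero => exact ⟨h0, hP₁0.posSemidef, hP₂0.posSemidef⟩
    | succ k ih =>
      rw [hP₁ k, hP₂ k]
      exact ⟨riccati_mono _ _ _ ih.2.1 ih.2.2 ih.1 (hR₁ k) (hR₂ k) (hR k),
        riccati_psd _ _ _ ih.2.1 (hQ k) (hR₁ k),
        riccati_psd _ _ _ ih.2.2 (hQ k) (hR₂ k)⟩
  refine ⟨fun k => (key k).1, ?_⟩
  intro Ps₁ Ps₂ hS₁ hS₂ h₁ h₂ k
  have hper : ∀ (P : ℕ → Matrix (Fin n) (Fin n) ℝ), (∀ j, P (j + T) = P j) →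
      ∀ j, P (k + j * T) = P k := by
    intro P hp j
    induction j with
    | zero => simp
    | succ j ih =>
      have : k + (j + 1) * T = (k + j * T) + T := by ring
      rw [this, hp, ih]
  have hkT : Tendsto (fun j : ℕ => k + j * T) atTop atTop := by
    apply tendsto_atTop_mono (fun j => ?_) tendsto_id
    calc (j : ℕ) = j * 1 := (Nat.mul_one j).symm
      _ ≤ j * T := Nat.mul_le_mul_left j hT
      _ ≤ k + j * T := Nat.le_add_left _ _
  have t₁ : Tendsto (fun j => P₁ (k + j * T) - Ps₁ k) atTop (nhds 0) := by
    have := h₁.comp hkT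
    simpa [Function.comp_def, hper Ps₁ hS₁.1] using this
  have t₂ : Tendsto (fun j => P₂ (k + j * T) - Ps₂ k) atTop (nhds 0) := by
    have := h₂.comp hkT
    simpa [Function.comp_def, hper Ps₂ hS₂.1] using this
  have t : Tendsto (fun j => P₁ (k + j * T) - P₂ (k + j * T)) atTop
      (nhds (Ps₁ k - Ps₂ k)) := by
    have := (t₁.sub t₂).add_const (Ps₁ k - Ps₂ k)
    simpa using this.congr (fun j => by abel)
  exact psd_of_tendsto ((hS₁.2.1 k).isHermitian.sub (hS₂.2.1 k).isHermitian) t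
    (fun j => (key (k + j * T)).1)
end

section
/- Let A ∈ ℝ^{n×n}, C ∈ ℝ^{m×n}, Q ∈ ℝ^{n×n} symmetric, P₁, P₂ ∈ ℝ^{n×n} symmetric positive semidefinite, and R₁, R₂ ∈ ℝ^{m×m} symmetric positive definite. For j = 1, 2 define K_j = A P_j Cᵀ (C P_j Cᵀ + R_j)^{−1}, Ã_j = A − K_j C, and the Riccati images P_j' = A P_j Aᵀ + Q − A P_j Cᵀ (C P_j Cᵀ + R_j)^{−1} C P_j Aᵀ. Then P₁' − P₂' = Ã₁ (P₁ − P₂) Ã₂ᵀ + K₁ (R₁ − R₂) K₂ᵀ. -/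
open Matrix

/-- the difference of two Riccati images.
With `K_j = A P_j Cᵀ (C P_j Cᵀ + R_j)⁻¹`, `At_j = A − K_j C`, and
`P_j' = A P_j Aᵀ + Q − A P_j Cᵀ (C P_j Cᵀ + R_j)⁻¹ C P_j Aᵀ`, one has
`P₁' − P₂' = At₁ (P₁ − P₂) At₂ᵀ + K₁ (R₁ − R₂) K₂ᵀ`. -/
theorem statement12 {n m : ℕ}
    (A : Matrix (Fin n) (Fin n) ℝ) (C : Matrix (Fin m) (Fin n) ℝ)
    (Q : Matrix (Fin n) (Fin n) ℝ) (hQ : Q.IsSymm)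
    (P₁ P₂ : Matrix (Fin n) (Fin n) ℝ) (hP₁ : P₁.PosSemidef) (hP₂ : P₂.PosSemidef)
    (R₁ R₂ : Matrix (Fin m) (Fin m) ℝ) (hR₁ : R₁.PosDef) (hR₂ : R₂.PosDef)
    (K₁ K₂ : Matrix (Fin n) (Fin m) ℝ)
    (hK₁ : K₁ = A * P₁ * Cᵀ * (C * P₁ * Cᵀ + R₁)⁻¹)
    (hK₂ : K₂ = A * P₂ * Cᵀ * (C * P₂ * Cᵀ + R₂)⁻¹)
    (At₁ At₂ : Matrix (Fin n) (Fin n) ℝ)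
    (hAt₁ : At₁ = A - K₁ * C) (hAt₂ : At₂ = A - K₂ * C)
    (P₁' P₂' : Matrix (Fin n) (Fin n) ℝ)
    (hP₁' : P₁' = A * P₁ * Aᵀ + Q - A * P₁ * Cᵀ * (C * P₁ * Cᵀ + R₁)⁻¹ * (C * P₁ * Aᵀ))
    (hP₂' : P₂' = A * P₂ * Aᵀ + Q - A * P₂ * Cᵀ * (C * P₂ * Cᵀ + R₂)⁻¹ * (C * P₂ * Aᵀ)) :
    P₁' - P₂' = At₁ * (P₁ - P₂) * At₂ᵀ + K₁ * (R₁ - R₂) * K₂ᵀ := by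
  have hP₁t : P₁ᵀ = P₁ := by
    have := hP₁.isHermitian; simpa [Matrix.IsHermitian, Matrix.conjTranspose_eq_transpose_of_trivial] using this
  have hP₂t : P₂ᵀ = P₂ := by
    have := hP₂.isHermitian; simpa [Matrix.IsHermitian, Matrix.conjTranspose_eq_transpose_of_trivial] using this
  set S₁ := C * P₁ * Cᵀ + R₁ with hS₁
  set S₂ := C * P₂ * Cᵀ + R₂ with hS₂
  have hS₁pd : S₁.PosDef := by
    refine Matrix.PosDef.posSemidef_add ?_ hR₁
    have := hP₁.mul_mul_conjTranspose_same C
    simpa using this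
  have hS₂pd : S₂.PosDef := by
    refine Matrix.PosDef.posSemidef_add ?_ hR₂
    have := hP₂.mul_mul_conjTranspose_same C
    simpa using this
  have hS₁inv : IsUnit S₁.det := hS₁pd.det_pos.ne'.isUnit
  have hS₂inv : IsUnit S₂.det := hS₂pd.det_pos.ne'.isUnit
  have hS₁t : S₁ᵀ = S₁ := by
    have := hS₁pd.isHermitian; simpa [Matrix.IsHermitian, Matrix.conjTranspose_eq_transpose_of_trivial] using this
  have hS₂t : S₂ᵀ = S₂ := by
    have := hS₂pd.isHermitian; simpa [Matrix.IsHermitian, Matrix.conjTranspose_eq_transpose_of_trivial] using this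
  -- K_j S_j = A P_j Cᵀ
  have hK₁S : K₁ * S₁ = A * P₁ * Cᵀ := by
    rw [hK₁, Matrix.mul_assoc _ S₁⁻¹ S₁, Matrix.nonsing_inv_mul _ hS₁inv, Matrix.mul_one]
  have hK₂S : K₂ * S₂ = A * P₂ * Cᵀ := by
    rw [hK₂, Matrix.mul_assoc _ S₂⁻¹ S₂, Matrix.nonsing_inv_mul _ hS₂inv, Matrix.mul_one]
  -- K₂ᵀ = S₂⁻¹ C P₂ Aᵀ
  have hK₂t : K₂ᵀ = S₂⁻¹ * (C * P₂ * Aᵀ) := by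
    rw [hK₂, Matrix.transpose_mul, Matrix.transpose_nonsing_inv, hS₂t]
    congr 1
    rw [Matrix.transpose_mul, Matrix.transpose_mul, Matrix.transpose_transpose, hP₂t,
      Matrix.mul_assoc]
  -- At₁ P₁ Cᵀ = K₁ R₁
  have key₁ : At₁ * P₁ * Cᵀ = K₁ * R₁ := by
    have h : At₁ * P₁ * Cᵀ = A * P₁ * Cᵀ - K₁ * (C * P₁ * Cᵀ) := by
      rw [hAt₁]
      simp only [Matrix.sub_mul, Matrix.mul_assoc]
    rw [h, ← hK₁S, hS₁, Matrix.mul_add]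
    abel
  -- C P₂ At₂ᵀ = R₂ K₂ᵀ
  have key₂ : C * P₂ * At₂ᵀ = R₂ * K₂ᵀ := by
    have h1 : C * P₂ * At₂ᵀ = C * P₂ * Aᵀ - C * P₂ * Cᵀ * K₂ᵀ := by
      rw [hAt₂, Matrix.transpose_sub, Matrix.transpose_mul]
      simp only [Matrix.mul_sub, Matrix.mul_assoc]
    have h2 : S₂ * K₂ᵀ = C * P₂ * Aᵀ := by
      rw [hK₂t, ← Matrix.mul_assoc, Matrix.mul_nonsing_inv _ hS₂inv, Matrix.one_mul]
    rw [h1, ← h2, hS₂, Matrix.add_mul]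
    abel
  -- A P₂ At₂ᵀ = A P₂ Aᵀ - K₂ (C P₂ Aᵀ)
  have key₃ : A * P₂ * At₂ᵀ = A * P₂ * Aᵀ - K₂ * (C * P₂ * Aᵀ) := by
    rw [hAt₂, Matrix.transpose_sub, Matrix.transpose_mul, Matrix.mul_sub, hK₂t]
    congr 1
    rw [hK₂]
    simp only [Matrix.mul_assoc]
  have hL₁ : A * P₁ * Cᵀ * S₁⁻¹ * (C * P₁ * Aᵀ) = K₁ * (C * P₁ * Aᵀ) := by rw [hK₁]
  have hL₂ : A * P₂ * Cᵀ * S₂⁻¹ * (C * P₂ * Aᵀ) = K₂ * (C * P₂ * Aᵀ) := by rw [hK₂]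
  rw [hP₁', hP₂', hL₁, hL₂]
  have expand : At₁ * (P₁ - P₂) * At₂ᵀ + K₁ * (R₁ - R₂) * K₂ᵀ
      = At₁ * P₁ * At₂ᵀ - At₁ * P₂ * At₂ᵀ + K₁ * R₁ * K₂ᵀ - K₁ * R₂ * K₂ᵀ := by
    simp only [Matrix.mul_sub, Matrix.sub_mul]
    abel
  rw [expand]
  have e1 : At₁ * P₁ * At₂ᵀ = At₁ * P₁ * Aᵀ - K₁ * R₁ * K₂ᵀ := by
    have h : At₁ * P₁ * At₂ᵀ = At₁ * P₁ * Aᵀ - At₁ * P₁ * Cᵀ * K₂ᵀ := by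
      rw [hAt₂, Matrix.transpose_sub, Matrix.transpose_mul]
      simp only [Matrix.mul_sub, Matrix.mul_assoc]
    rw [h, key₁]
  have e2 : At₁ * P₂ * At₂ᵀ = A * P₂ * At₂ᵀ - K₁ * R₂ * K₂ᵀ := by
    have h : At₁ * P₂ * At₂ᵀ = A * P₂ * At₂ᵀ - K₁ * (C * P₂ * At₂ᵀ) := by
      rw [hAt₁]
      simp only [Matrix.sub_mul, Matrix.mul_assoc]
    rw [h, key₂, ← Matrix.mul_assoc]
  rw [e1, e2, key₃]
  have e3 : At₁ * P₁ * Aᵀ = A * P₁ * Aᵀ - K₁ * (C * P₁ * Aᵀ) := by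
    rw [hAt₁]
    simp only [Matrix.sub_mul, Matrix.mul_assoc]
  rw [e3]
  abel
end

section
/- For every matrix A ∈ ℝ^{n×n} and every k ∈ ℕ, ‖A^k‖₂ ≤ √n · Σ_{j=0}^{n−1} C(n−1, j) C(k, j) ‖A‖₂^j ρ(A)^{k−j}, where C(m, j) denotes the binomial coefficient (with C(k, j) = 0 for j > k). -/
open Matrix

/-- The (real) spectral radius of a real square matrix, via its complex spectrum. -/
noncomputable def specRad {n : ℕ} (A : Matrix (Fin n) (Fin n) ℝ) : ℝ :=
  (spectralRadius ℂ (A.map (algebraMap ℝ ℂ))).toReal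

open scoped Matrix.Norms.L2Operator

open scoped ENNReal NNReal

set_option linter.unusedSectionVars false
set_option linter.unusedTactic false
set_option maxHeartbeats 1000000

namespace Stmt16

variable {n : ℕ}

def bmat {R : Type*} (a : R) (r c : Fin n → R) (M : Matrix (Fin n) (Fin n) R) :
    Matrix (Fin (n + 1)) (Fin (n + 1)) R :=
  Matrix.of (Fin.cons (Fin.cons a r) (fun p => Fin.cons (c p) (M p)))

variable {R : Type*} [CommRing R]

@[simp] lemma bmat_zz (a : R) (r c : Fin n → R) (M : Matrix (Fin n) (Fin n) R) :
    bmat a r c M 0 0 = a := rfl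
@[simp] lemma bmat_zs (a : R) (r c : Fin n → R) (M : Matrix (Fin n) (Fin n) R) (q : Fin n) :
    bmat a r c M 0 q.succ = r q := rfl
@[simp] lemma bmat_sz (a : R) (r c : Fin n → R) (M : Matrix (Fin n) (Fin n) R) (p : Fin n) :
    bmat a r c M p.succ 0 = c p := by simp [bmat]
@[simp] lemma bmat_ss (a : R) (r c : Fin n → R) (M : Matrix (Fin n) (Fin n) R) (p q : Fin n) :
    bmat a r c M p.succ q.succ = M p q := by simp [bmat]

lemma bmat_mul (a a' : R) (r r' c c' : Fin n → R) (M M' : Matrix (Fin n) (Fin n) R) :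
    bmat a r c M * bmat a' r' c' M' =
      bmat (a * a' + r ⬝ᵥ c') (fun q => a * r' q + r ⬝ᵥ fun i => M' i q)
        (fun p => c p * a' + M p ⬝ᵥ c')
        (Matrix.of fun p q => c p * r' q + M p ⬝ᵥ fun i => M' i q) := by
  ext p q
  refine Fin.cases ?_ (fun p => ?_) p <;> refine Fin.cases ?_ (fun q => ?_) q <;>
    simp [Matrix.mul_apply, Fin.sum_univ_succ, dotProduct]

lemma bmat_conjTranspose (a : ℂ) (r c : Fin n → ℂ) (M : Matrix (Fin n) (Fin n) ℂ) :
    (bmat a r c M)ᴴ = bmat (star a) (fun q => star (c q)) (fun p => star (r p)) Mᴴ := by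
  ext p q
  refine Fin.cases ?_ (fun p => ?_) p <;> refine Fin.cases ?_ (fun q => ?_) q <;>
    simp [conjTranspose_apply]

lemma bmat_one : (1 : Matrix (Fin (n + 1)) (Fin (n + 1)) R) = bmat 1 0 0 1 := by
  ext p q
  refine Fin.cases ?_ (fun p => ?_) p <;> refine Fin.cases ?_ (fun q => ?_) q <;>
    simp [Matrix.one_apply, Fin.succ_ne_zero, (Fin.succ_ne_zero _).symm, Fin.succ_inj]

lemma bmat_smul (z : R) (a : R) (r c : Fin n → R) (M : Matrix (Fin n) (Fin n) R) :
    z • bmat a r c M = bmat (z * a) (z • r) (z • c) (z • M) := by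
  ext p q
  refine Fin.cases ?_ (fun p => ?_) p <;> refine Fin.cases ?_ (fun q => ?_) q <;> simp

lemma bmat_sub (a a' : R) (r r' c c' : Fin n → R) (M M' : Matrix (Fin n) (Fin n) R) :
    bmat a r c M - bmat a' r' c' M' = bmat (a - a') (r - r') (c - c') (M - M') := by
  ext p q
  refine Fin.cases ?_ (fun p => ?_) p <;> refine Fin.cases ?_ (fun q => ?_) q <;>
    simp [Matrix.sub_apply]

lemma bmat_det (a : R) (r : Fin n → R) (M : Matrix (Fin n) (Fin n) R) :
    (bmat a r 0 M).det = a * M.det := by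
  rw [Matrix.det_succ_column_zero, Fin.sum_univ_succ]
  have h0 : ∀ p : Fin n, bmat a r 0 M p.succ 0 = 0 := fun p => by simp
  simp only [h0, mul_zero, zero_mul, Finset.sum_const_zero, add_zero]
  have : (bmat a r (0 : Fin n → R) M).submatrix (Fin.succAbove 0) Fin.succ = M := by
    ext p q; simp [Fin.succAbove]
  rw [this]; simp

/-- spectrum membership via determinant, over a field -/
lemma mem_spec_iff_det {m : ℕ} (M : Matrix (Fin m) (Fin m) ℂ) (z : ℂ) :
    z ∈ spectrum ℂ M ↔ (z • (1 : Matrix (Fin m) (Fin m) ℂ) - M).det = 0 := by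
  rw [spectrum.mem_iff, Algebra.algebraMap_eq_smul_one, Matrix.isUnit_iff_isUnit_det,
    isUnit_iff_ne_zero, not_not]

lemma spec_conj {m : ℕ} (U B : Matrix (Fin m) (Fin m) ℂ) (hU : Uᴴ * U = 1) :
    spectrum ℂ (Uᴴ * B * U) = spectrum ℂ B := by
  ext z
  rw [mem_spec_iff_det, mem_spec_iff_det]
  have key : z • (1 : Matrix (Fin m) (Fin m) ℂ) - Uᴴ * B * U
      = Uᴴ * (z • (1 : Matrix (Fin m) (Fin m) ℂ) - B) * U := by
    rw [Matrix.mul_sub, Matrix.sub_mul]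
    congr 1
    rw [Matrix.mul_smul, Matrix.mul_one, Matrix.smul_mul, hU]
  rw [key, Matrix.det_mul, Matrix.det_mul]
  have hdet : Uᴴ.det * U.det = 1 := by
    rw [← Matrix.det_mul, hU, Matrix.det_one]
  constructor
  · intro h
    have h2 : (z • (1 : Matrix (Fin m) (Fin m) ℂ) - B).det * (Uᴴ.det * U.det) = 0 := by
      rw [← h]; ring
    rwa [hdet, mul_one] at h2
  · intro h; rw [h]; ring

theorem schur {m : ℕ} (B : Matrix (Fin m) (Fin m) ℂ) :
    ∃ U T : Matrix (Fin m) (Fin m) ℂ,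
      Uᴴ * U = 1 ∧ U * Uᴴ = 1 ∧ B = U * T * Uᴴ ∧
      (∀ p q : Fin m, (q : ℕ) < (p : ℕ) → T p q = 0) ∧
      (∀ p, T p p ∈ spectrum ℂ B) := by
  induction m with
  | zero =>
      exact ⟨1, B, by simp, by simp, by simp, fun p => p.elim0, fun p => p.elim0⟩
  | succ n ih =>
      classical
      -- eigenvalue and eigenvector
      obtain ⟨μ, hμ⟩ := Module.End.exists_eigenvalue (Matrix.mulVecLin B)
      obtain ⟨v, hv⟩ := hμ.exists_hasEigenvector
      have hv0 : v ≠ 0 := hv.right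
      have hBv : B *ᵥ v = μ • v := hv.apply_eq_smul
      -- normalized eigenvector in Euclidean space
      set v' : EuclideanSpace ℂ (Fin (n + 1)) := (WithLp.equiv 2 _).symm v with hv'def
      have hv'0 : v' ≠ 0 := by
        intro h
        apply hv0
        have := congrArg (WithLp.equiv 2 _) h
        simpa [hv'def] using this
      set w : EuclideanSpace ℂ (Fin (n + 1)) := ((‖v'‖ : ℂ))⁻¹ • v' with hwdef
      have hw1 : ‖w‖ = 1 := norm_smul_inv_norm hv'0
      have hwfun : (fun q => w q) = ((‖v'‖ : ℂ))⁻¹ • v := rfl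
      have hBw : B *ᵥ (fun q => w q) = μ • (fun q => w q) := by
        rw [hwfun, Matrix.mulVec_smul, hBv, smul_comm]
      -- orthonormal basis with first vector w
      have hcard : Module.finrank ℂ (EuclideanSpace ℂ (Fin (n + 1)))
          = Fintype.card (Fin (n + 1)) := by
        simp [finrank_euclideanSpace_fin]
      have horth : Orthonormal ℂ ((({0} : Set (Fin (n + 1)))).restrict
          (fun _ : Fin (n + 1) => w)) := by
        constructor
        · intro i; exact hw1
        · intro i j hij; exact absurd (Subsingleton.elim i j) hij
      obtain ⟨b, hb⟩ := horth.exists_orthonormalBasis_extension_of_card_eq hcard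
      have hb0 : b 0 = w := hb 0 (by simp)
      -- the unitary U with columns b i
      set U : Matrix (Fin (n + 1)) (Fin (n + 1)) ℂ := Matrix.of fun p i => b i p with hUdef
      have hinner : ∀ i j, ∑ p, star (b i p) * b j p = if i = j then 1 else 0 := by
        intro i j
        have hio := orthonormal_iff_ite.mp b.orthonormal i j
        rw [PiLp.inner_apply] at hio
        simp only [RCLike.inner_apply, starRingEnd_apply] at hio
        rw [← hio]; exact Finset.sum_congr rfl fun p _ => mul_comm _ _
      have hU : Uᴴ * U = 1 := by
        ext i j
        rw [Matrix.mul_apply, Matrix.one_apply]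
        have he : ∀ p, Uᴴ i p * U p j = star (b i p) * b j p := fun p => rfl
        rw [Finset.sum_congr rfl fun p _ => he p, hinner i j]
      have hU' : U * Uᴴ = 1 := mul_eq_one_comm.mp hU
      -- C = Uᴴ B U has first column (μ,0,…,0)
      set C : Matrix (Fin (n + 1)) (Fin (n + 1)) ℂ := Uᴴ * (B * U) with hCdef
      have hU0 : ∀ q, U q 0 = w q := by
        intro q; show b 0 q = w q; rw [hb0]
      have hBU0 : ∀ p, (B * U) p 0 = μ * w p := by
        intro p
        rw [Matrix.mul_apply]
        have he : ∀ q, B p q * U q 0 = B p q * w q := fun q => by rw [hU0]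
        rw [Finset.sum_congr rfl fun q _ => he q]
        have h2 : ∑ q, B p q * w q = (B *ᵥ fun q => w q) p := rfl
        rw [h2, hBw]
        rfl
      have hCcol : ∀ i, C i 0 = if i = 0 then μ else 0 := by
        intro i
        have h1 : C i 0 = ∑ p, star (b i p) * ((B * U) p 0) := by
          rw [hCdef, Matrix.mul_apply]; rfl
        rw [h1]
        have h2 : ∀ p : Fin (n+1), star (b i p) * ((B * U) p 0)
            = μ * (star (b i p) * b 0 p) := by
          intro p; rw [hBU0 p, hb0]; ring
        rw [Finset.sum_congr rfl (fun p _ => h2 p), ← Finset.mul_sum, hinner i 0]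
        split <;> simp
      -- block structure
      set B' : Matrix (Fin n) (Fin n) ℂ := Matrix.of fun p q : Fin n => C p.succ q.succ
        with hB'def
      set rC : Fin n → ℂ := fun q => C 0 q.succ with hrCdef
      have hC : C = bmat μ rC 0 B' := by
        ext p q
        refine Fin.cases ?_ (fun p' => ?_) p <;> refine Fin.cases ?_ (fun q' => ?_) q
        · rw [bmat_zz, hCcol 0]; simp
        · rw [bmat_zs]
        · rw [bmat_sz, hCcol p'.succ]; simp [Fin.succ_ne_zero]
        · rw [bmat_ss]; rfl
      obtain ⟨V, T', hV, hV', hBVT, htri', hdiag'⟩ := ih B'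
      -- assemble
      set V₁ : Matrix (Fin (n + 1)) (Fin (n + 1)) ℂ := bmat 1 0 0 V with hV₁def
      set T : Matrix (Fin (n + 1)) (Fin (n + 1)) ℂ := bmat μ (rC ᵥ* V) 0 T' with hTdef
      have hstar0 : (fun q : Fin n => star ((0 : Fin n → ℂ) q)) = 0 := by
        funext q; simp
      have hV₁H : V₁ᴴ = bmat 1 0 0 Vᴴ := by
        rw [hV₁def, bmat_conjTranspose, star_one, hstar0]
      have hmul0 : ∀ (a a' : ℂ) (r r' : Fin n → ℂ) (M M' : Matrix (Fin n) (Fin n) ℂ),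
          bmat a r 0 M * bmat a' r' 0 M' =
            bmat (a * a') (fun q => a * r' q + r ⬝ᵥ fun i => M' i q) 0 (M * M') := by
        intro a a' r r' M M'
        rw [bmat_mul]
        have hc : (fun p => (0 : Fin n → ℂ) p * a' + M p ⬝ᵥ (0 : Fin n → ℂ)) = 0 := by
          funext p; simp
        have ha : a * a' + r ⬝ᵥ (0 : Fin n → ℂ) = a * a' := by simp
        have hM : (Matrix.of fun p q => (0 : Fin n → ℂ) p * r' q + M p ⬝ᵥ fun i => M' i q)
            = M * M' := by
          ext p q; simp [Matrix.mul_apply, dotProduct]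
        rw [hc, ha, hM]
      have hrow0 : ∀ M' : Matrix (Fin n) (Fin n) ℂ,
          (fun q => (1:ℂ) * (0 : Fin n → ℂ) q + (0 : Fin n → ℂ) ⬝ᵥ fun i => M' i q) = 0 := by
        intro M'; funext q; simp
      have hV₁u : V₁ᴴ * V₁ = 1 := by
        rw [hV₁H, hV₁def, hmul0, hV, hrow0, mul_one, ← bmat_one]
      have hV₁u' : V₁ * V₁ᴴ = 1 := mul_eq_one_comm.mp hV₁u
      have hCVT : C = V₁ * T * V₁ᴴ := by
        have key : V₁ * T * V₁ᴴ = bmat μ rC 0 B' := by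
          rw [hV₁H, hV₁def, hTdef, hmul0, hmul0]
          have h1 : (fun q => (1 : ℂ) * μ * (0 : Fin n → ℂ) q +
              (fun q' => (1:ℂ) * (rC ᵥ* V) q' + (0 : Fin n → ℂ) ⬝ᵥ fun i => T' i q') ⬝ᵥ
                fun i => Vᴴ i q) = rC := by
            funext q
            have h2 : (fun q' => (1:ℂ) * (rC ᵥ* V) q' + (0 : Fin n → ℂ) ⬝ᵥ fun i => T' i q')
                = rC ᵥ* V := by funext q'; simp
            rw [h2]
            have h3 : (rC ᵥ* V) ⬝ᵥ (fun i => Vᴴ i q) = ((rC ᵥ* V) ᵥ* Vᴴ) q := rfl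
            rw [Pi.zero_apply, h3, Matrix.vecMul_vecMul, hV', Matrix.vecMul_one]
            ring
          rw [h1, one_mul, mul_one, ← hBVT]
        rw [key, hC]
      have hBC : B = U * C * Uᴴ := by
        rw [hCdef, ← Matrix.mul_assoc, ← Matrix.mul_assoc, hU', Matrix.one_mul,
          Matrix.mul_assoc, hU', Matrix.mul_one]
      refine ⟨U * V₁, T, ?_, ?_, ?_, ?_, ?_⟩
      · rw [conjTranspose_mul, Matrix.mul_assoc, ← Matrix.mul_assoc Uᴴ U V₁, hU,
          Matrix.one_mul, hV₁u]
      · rw [conjTranspose_mul, Matrix.mul_assoc, ← Matrix.mul_assoc V₁ V₁ᴴ Uᴴ, hV₁u',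
          Matrix.one_mul, hU']
      · rw [conjTranspose_mul, hBC, hCVT]
        simp only [Matrix.mul_assoc]
      · intro p q hpq
        rcases Fin.eq_zero_or_eq_succ p with rfl | ⟨p', rfl⟩
        · exact absurd hpq (by simp)
        · rcases Fin.eq_zero_or_eq_succ q with rfl | ⟨q', rfl⟩
          · rw [hTdef, bmat_sz]; rfl
          · rw [hTdef, bmat_ss]
            refine htri' p' q' ?_
            have : (q' : ℕ) + 1 < (p' : ℕ) + 1 := by simpa using hpq
            omega
      · -- diagonal entries in spectrum
        have hspecC : spectrum ℂ C = spectrum ℂ B := by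
          have hCe : C = Uᴴ * B * U := by rw [hCdef, Matrix.mul_assoc]
          rw [hCe, spec_conj U B hU]
        intro p
        rcases Fin.eq_zero_or_eq_succ p with rfl | ⟨p', rfl⟩
        · rw [hTdef, bmat_zz, mem_spec_iff_det]
          have hker : (μ • (1 : Matrix (Fin (n+1)) (Fin (n+1)) ℂ) - B) *ᵥ v = 0 := by
            rw [Matrix.sub_mulVec, Matrix.smul_mulVec, Matrix.one_mulVec, hBv,
              sub_self]
          exact Matrix.exists_mulVec_eq_zero_iff.mp ⟨v, hv0, hker⟩
        · rw [hTdef, bmat_ss]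
          have hz := hdiag' p'
          rw [← hspecC]
          rw [mem_spec_iff_det] at hz ⊢
          have hsplit : T' p' p' • (1 : Matrix (Fin (n+1)) (Fin (n+1)) ℂ) - C
              = bmat (T' p' p' - μ) (T' p' p' • 0 - rC) 0
                  (T' p' p' • (1 : Matrix (Fin n) (Fin n) ℂ) - B') := by
            rw [hC, bmat_one, bmat_smul, bmat_sub, mul_one]
            congr 1
            simp
          rw [hsplit, bmat_det, hz, mul_zero]



variable {𝕜 : Type*} [RCLike 𝕜] {m m' : ℕ}

lemma euclid_apply_le {ι : Type*} [Fintype ι] (x : EuclideanSpace 𝕜 ι) (p : ι) :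
    ‖x p‖ ≤ ‖x‖ := by
  rw [EuclideanSpace.norm_eq]
  have h1 : ‖x p‖ ^ 2 ≤ ∑ i, ‖x i‖ ^ 2 :=
    Finset.single_le_sum (f := fun i => ‖x i‖ ^ 2) (fun i _ => sq_nonneg _) (Finset.mem_univ p)
  calc ‖x p‖ = Real.sqrt (‖x p‖ ^ 2) := (Real.sqrt_sq (norm_nonneg _)).symm
    _ ≤ _ := Real.sqrt_le_sqrt h1

lemma opnorm_le_bound (M : Matrix (Fin m) (Fin m') 𝕜) {c : ℝ} (hc : 0 ≤ c)
    (h : ∀ x : EuclideanSpace 𝕜 (Fin m'),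
      ‖(EuclideanSpace.equiv (Fin m) 𝕜).symm (M *ᵥ x)‖ ≤ c * ‖x‖) :
    ‖M‖ ≤ c := by
  rw [Matrix.l2_opNorm_def]
  exact ContinuousLinearMap.opNorm_le_bound _ hc fun x => h x

lemma entry_le_norm (M : Matrix (Fin m) (Fin m') 𝕜) (p : Fin m) (q : Fin m') :
    ‖M p q‖ ≤ ‖M‖ := by
  have hx := Matrix.l2_opNorm_mulVec M (EuclideanSpace.single q 1)
  rw [EuclideanSpace.norm_single, norm_one, mul_one] at hx
  refine le_trans ?_ hx
  have h2 : ((EuclideanSpace.equiv (Fin m) 𝕜).symm (M *ᵥ (EuclideanSpace.single q 1))) p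
      = M p q := by
    show (M *ᵥ (EuclideanSpace.single q 1) : Fin m → 𝕜) p = M p q
    have : (EuclideanSpace.single q (1:𝕜) : Fin m' → 𝕜) = Pi.single q 1 := rfl
    rw [this, Matrix.mulVec_single]
    simp
  calc ‖M p q‖ = ‖((EuclideanSpace.equiv (Fin m) 𝕜).symm
        (M *ᵥ (EuclideanSpace.single q 1))) p‖ := by rw [h2]
    _ ≤ _ := euclid_apply_le _ p

lemma norm_le_sqrt_row (M : Matrix (Fin m) (Fin m) 𝕜) {S : ℝ} (hS : 0 ≤ S)
    (h : ∀ p, ∑ q, ‖M p q‖ ≤ S) : ‖M‖ ≤ Real.sqrt m * S := by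
  apply opnorm_le_bound _ (by positivity)
  intro x
  have hcomp : ∀ p, ‖(M *ᵥ (x : Fin m → 𝕜)) p‖ ≤ S * ‖x‖ := by
    intro p
    calc ‖(M *ᵥ (x : Fin m → 𝕜)) p‖ = ‖∑ q, M p q * x q‖ := rfl
      _ ≤ ∑ q, ‖M p q * x q‖ := norm_sum_le _ _
      _ = ∑ q, ‖M p q‖ * ‖x q‖ := by simp [norm_mul]
      _ ≤ ∑ q, ‖M p q‖ * ‖x‖ := Finset.sum_le_sum fun q _ =>
          mul_le_mul_of_nonneg_left (euclid_apply_le x q) (norm_nonneg _)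
      _ = (∑ q, ‖M p q‖) * ‖x‖ := (Finset.sum_mul _ _ _).symm
      _ ≤ S * ‖x‖ := mul_le_mul_of_nonneg_right (h p) (norm_nonneg _)
  rw [EuclideanSpace.norm_eq]
  have hstep : ∑ p, ‖((EuclideanSpace.equiv (Fin m) 𝕜).symm (M *ᵥ x)) p‖ ^ 2
      ≤ ∑ _p : Fin m, (S * ‖x‖) ^ 2 :=
    Finset.sum_le_sum fun p _ => pow_le_pow_left₀ (norm_nonneg _) (hcomp p) 2
  calc Real.sqrt (∑ p, ‖((EuclideanSpace.equiv (Fin m) 𝕜).symm (M *ᵥ x)) p‖ ^ 2)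
      ≤ Real.sqrt (∑ _p : Fin m, (S * ‖x‖) ^ 2) := Real.sqrt_le_sqrt hstep
    _ = Real.sqrt ((m : ℝ) * (S * ‖x‖) ^ 2) := by
        rw [Finset.sum_const, Finset.card_univ, Fintype.card_fin, nsmul_eq_mul]
    _ = Real.sqrt m * (S * ‖x‖) := by
        rw [Real.sqrt_mul (by positivity), Real.sqrt_sq (by positivity)]
    _ = Real.sqrt m * S * ‖x‖ := by ring

lemma norm_one_le : ‖(1 : Matrix (Fin m) (Fin m) 𝕜)‖ ≤ 1 := by
  rw [Matrix.cstar_norm_def, _root_.map_one]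
  exact ContinuousLinearMap.norm_id_le

lemma unitary_norm_le (U : Matrix (Fin m) (Fin m) 𝕜) (hU : Uᴴ * U = 1) : ‖U‖ ≤ 1 := by
  have h := Matrix.l2_opNorm_conjTranspose_mul_self U
  rw [hU] at h
  have h1 : ‖U‖ * ‖U‖ ≤ 1 := h ▸ norm_one_le
  nlinarith [norm_nonneg U]

lemma real_le_mapC (R : Matrix (Fin m) (Fin m') ℝ) :
    ‖R‖ ≤ ‖R.map (algebraMap ℝ ℂ)‖ := by
  apply opnorm_le_bound _ (norm_nonneg _)
  intro x
  set z : EuclideanSpace ℂ (Fin m') := (WithLp.equiv 2 _).symm (fun q => (x q : ℂ)) with hzdef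
  have hz : ‖z‖ = ‖x‖ := by
    rw [EuclideanSpace.norm_eq, EuclideanSpace.norm_eq]
    congr 1
    refine Finset.sum_congr rfl fun q _ => ?_
    have : z q = (x q : ℂ) := rfl
    rw [this, Complex.norm_real]
  have hmv : ∀ p, (R.map (algebraMap ℝ ℂ) *ᵥ (z : Fin m' → ℂ)) p = ((R *ᵥ x) p : ℂ) := by
    intro p
    show ∑ q, (algebraMap ℝ ℂ) (R p q) * z q = ((∑ q, R p q * x q : ℝ) : ℂ)
    push_cast
    refine Finset.sum_congr rfl fun q _ => rfl
  have hnorm : ‖(EuclideanSpace.equiv (Fin m) ℝ).symm (R *ᵥ x)‖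
      = ‖(EuclideanSpace.equiv (Fin m) ℂ).symm (R.map (algebraMap ℝ ℂ) *ᵥ z)‖ := by
    rw [EuclideanSpace.norm_eq, EuclideanSpace.norm_eq]
    congr 1
    refine Finset.sum_congr rfl fun p _ => ?_
    have h1 : ((EuclideanSpace.equiv (Fin m) ℂ).symm (R.map (algebraMap ℝ ℂ) *ᵥ z)) p
        = ((R *ᵥ x) p : ℂ) := hmv p
    rw [h1, Complex.norm_real]
    rfl
  rw [hnorm, ← hz]
  exact Matrix.l2_opNorm_mulVec _ z

lemma sq_norm_complex (w : ℂ) : ‖w‖ ^ 2 = w.re ^ 2 + w.im ^ 2 := by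
  rw [Complex.sq_norm, Complex.normSq_apply]; ring

lemma mapC_le_real (R : Matrix (Fin m) (Fin m') ℝ) :
    ‖R.map (algebraMap ℝ ℂ)‖ ≤ ‖R‖ := by
  apply opnorm_le_bound _ (norm_nonneg _)
  intro z
  set u : EuclideanSpace ℝ (Fin m') := (WithLp.equiv 2 _).symm (fun q => (z q).re) with hudef
  set vv : EuclideanSpace ℝ (Fin m') := (WithLp.equiv 2 _).symm (fun q => (z q).im) with hvdef
  have hre : ∀ p, ((R.map (algebraMap ℝ ℂ) *ᵥ (z : Fin m' → ℂ)) p).re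
      = (R *ᵥ (u : Fin m' → ℝ)) p := by
    intro p
    show (∑ q, (algebraMap ℝ ℂ) (R p q) * z q).re = ∑ q, R p q * (z q).re
    rw [Complex.re_sum]
    exact Finset.sum_congr rfl fun q _ => by simp [Complex.mul_re]
  have him : ∀ p, ((R.map (algebraMap ℝ ℂ) *ᵥ (z : Fin m' → ℂ)) p).im
      = (R *ᵥ (vv : Fin m' → ℝ)) p := by
    intro p
    show (∑ q, (algebraMap ℝ ℂ) (R p q) * z q).im = ∑ q, R p q * (z q).im
    rw [Complex.im_sum]
    exact Finset.sum_congr rfl fun q _ => by simp [Complex.mul_im]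
  have hkey : ‖(EuclideanSpace.equiv (Fin m) ℂ).symm (R.map (algebraMap ℝ ℂ) *ᵥ z)‖ ^ 2
      = ‖(EuclideanSpace.equiv (Fin m) ℝ).symm (R *ᵥ u)‖ ^ 2
        + ‖(EuclideanSpace.equiv (Fin m) ℝ).symm (R *ᵥ vv)‖ ^ 2 := by
    rw [EuclideanSpace.norm_eq, EuclideanSpace.norm_eq, EuclideanSpace.norm_eq,
      Real.sq_sqrt (Finset.sum_nonneg fun p _ => sq_nonneg _),
      Real.sq_sqrt (Finset.sum_nonneg fun p _ => sq_nonneg _),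
      Real.sq_sqrt (Finset.sum_nonneg fun p _ => sq_nonneg _),
      ← Finset.sum_add_distrib]
    refine Finset.sum_congr rfl fun p _ => ?_
    have hc1 : ((EuclideanSpace.equiv (Fin m) ℂ).symm (R.map (algebraMap ℝ ℂ) *ᵥ z)) p
        = (R.map (algebraMap ℝ ℂ) *ᵥ (z : Fin m' → ℂ)) p := rfl
    have hc2 : ((EuclideanSpace.equiv (Fin m) ℝ).symm (R *ᵥ u)) p
        = (R *ᵥ (u : Fin m' → ℝ)) p := rfl
    have hc3 : ((EuclideanSpace.equiv (Fin m) ℝ).symm (R *ᵥ vv)) p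
        = (R *ᵥ (vv : Fin m' → ℝ)) p := rfl
    rw [hc1, hc2, hc3, sq_norm_complex, hre p, him p]
    rw [Real.norm_eq_abs, Real.norm_eq_abs, sq_abs, sq_abs]
  have hz2 : ‖z‖ ^ 2 = ‖u‖ ^ 2 + ‖vv‖ ^ 2 := by
    rw [EuclideanSpace.norm_eq, EuclideanSpace.norm_eq, EuclideanSpace.norm_eq,
      Real.sq_sqrt (Finset.sum_nonneg fun p _ => sq_nonneg _),
      Real.sq_sqrt (Finset.sum_nonneg fun p _ => sq_nonneg _),
      Real.sq_sqrt (Finset.sum_nonneg fun p _ => sq_nonneg _),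
      ← Finset.sum_add_distrib]
    refine Finset.sum_congr rfl fun q _ => ?_
    rw [sq_norm_complex]
    rw [Real.norm_eq_abs, Real.norm_eq_abs, sq_abs, sq_abs]
    rfl
  have hb1 := Matrix.l2_opNorm_mulVec R u
  have hb2 := Matrix.l2_opNorm_mulVec R vv
  have hsq : ‖(EuclideanSpace.equiv (Fin m) ℂ).symm (R.map (algebraMap ℝ ℂ) *ᵥ z)‖ ^ 2
      ≤ (‖R‖ * ‖z‖) ^ 2 := by
    rw [hkey]
    have h1 : ‖(EuclideanSpace.equiv (Fin m) ℝ).symm (R *ᵥ u)‖ ^ 2 ≤ (‖R‖ * ‖u‖) ^ 2 :=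
      pow_le_pow_left₀ (norm_nonneg _) hb1 2
    have h2 : ‖(EuclideanSpace.equiv (Fin m) ℝ).symm (R *ᵥ vv)‖ ^ 2 ≤ (‖R‖ * ‖vv‖) ^ 2 :=
      pow_le_pow_left₀ (norm_nonneg _) hb2 2
    calc _ ≤ (‖R‖ * ‖u‖) ^ 2 + (‖R‖ * ‖vv‖) ^ 2 := add_le_add h1 h2
      _ = ‖R‖ ^ 2 * (‖u‖ ^ 2 + ‖vv‖ ^ 2) := by ring
      _ = (‖R‖ * ‖z‖) ^ 2 := by rw [← hz2]; ring
  calc ‖(EuclideanSpace.equiv (Fin m) ℂ).symm (R.map (algebraMap ℝ ℂ) *ᵥ z)‖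
      = Real.sqrt (‖(EuclideanSpace.equiv (Fin m) ℂ).symm
          (R.map (algebraMap ℝ ℂ) *ᵥ z)‖ ^ 2) := (Real.sqrt_sq (norm_nonneg _)).symm
    _ ≤ Real.sqrt ((‖R‖ * ‖z‖) ^ 2) := Real.sqrt_le_sqrt hsq
    _ = ‖R‖ * ‖z‖ := Real.sqrt_sq (by positivity)



lemma sum_range_choose' (m j : ℕ) :
    ∑ t ∈ Finset.range m, t.choose j = m.choose (j + 1) := by
  induction m with
  | zero => simp
  | succ m ih =>
      rw [Finset.sum_range_succ, ih, Nat.choose_succ_succ]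
      simp only [Nat.succ_eq_add_one]
      omega

/-- strictly upper triangular all-ones matrix -/
def matN (n : ℕ) : Matrix (Fin n) (Fin n) ℝ :=
  Matrix.of fun p q => if (p : ℕ) < (q : ℕ) then 1 else 0

lemma matN_nonneg {n : ℕ} (p q : Fin n) : 0 ≤ matN n p q := by
  unfold matN; rw [Matrix.of_apply]; split <;> norm_num

lemma fin_sum_choose {n : ℕ} (p : Fin n) (j : ℕ) :
    ∑ i : Fin n, (if (p : ℕ) < (i : ℕ) then ((n - 1 - (i : ℕ)).choose j) else 0)
      = (n - 1 - (p : ℕ)).choose (j + 1) := by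
  rw [Fin.sum_univ_eq_sum_range (fun i => if (p : ℕ) < i then ((n - 1 - i).choose j) else 0)]
  rw [← sum_range_choose' (n - 1 - (p : ℕ)) j]
  rw [Finset.sum_ite, Finset.sum_const_zero, add_zero]
  refine Finset.sum_nbij' (fun i => n - 1 - i) (fun t => n - 1 - t) ?_ ?_ ?_ ?_ ?_
  · intro i hi
    simp only [Finset.mem_filter, Finset.mem_range] at hi
    simp only [Finset.mem_range]
    omega
  · intro t ht
    have hp := p.isLt
    simp only [Finset.mem_range] at ht
    simp only [Finset.mem_filter, Finset.mem_range]
    omega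
  · intro i hi
    simp only [Finset.mem_filter, Finset.mem_range] at hi
    show n - 1 - (n - 1 - i) = i
    omega
  · intro t ht
    have hp := p.isLt
    simp only [Finset.mem_range] at ht
    show n - 1 - (n - 1 - t) = t
    omega
  · intro i hi
    rfl

/-- row sums of powers of matN -/
lemma matN_pow_rowsum {n : ℕ} (j : ℕ) (p : Fin n) :
    ∑ q, (matN n ^ j) p q ≤ (((n - 1 - (p : ℕ)).choose j : ℕ) : ℝ) := by
  induction j generalizing p with
  | zero =>
      simp only [pow_zero]
      have : ∑ q, (1 : Matrix (Fin n) (Fin n) ℝ) p q = 1 := by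
        simp [Matrix.one_apply]
      rw [this]; simp
  | succ j ih =>
      rw [pow_succ']
      have hexp : ∑ q, (matN n * matN n ^ j) p q
          = ∑ i, matN n p i * (∑ q, (matN n ^ j) i q) := by
        simp only [Matrix.mul_apply]
        rw [Finset.sum_comm]
        exact Finset.sum_congr rfl fun i _ => by rw [Finset.mul_sum]
      rw [hexp]
      have hstep : ∑ i, matN n p i * (∑ q, (matN n ^ j) i q)
          ≤ ∑ i : Fin n, (if (p : ℕ) < (i : ℕ)
              then (((n - 1 - (i : ℕ)).choose j : ℕ) : ℝ) else 0) := by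
        refine Finset.sum_le_sum fun i _ => ?_
        unfold matN
        rw [Matrix.of_apply]
        split
        · rw [one_mul]; exact ih i
        · rw [zero_mul]
      refine le_trans hstep (le_of_eq ?_)
      have hcast : ∑ i : Fin n, (if (p : ℕ) < (i : ℕ)
            then (((n - 1 - (i : ℕ)).choose j : ℕ) : ℝ) else 0)
          = ((∑ i : Fin n, if (p : ℕ) < (i : ℕ)
            then ((n - 1 - (i : ℕ)).choose j) else 0 : ℕ) : ℝ) := by
        rw [Nat.cast_sum]
        exact Finset.sum_congr rfl fun i _ => by rw [Nat.cast_ite, Nat.cast_zero]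
      rw [hcast, fin_sum_choose]

/-- entrywise domination of powers -/
lemma pow_entry_dom {n : ℕ} (S : Matrix (Fin n) (Fin n) ℂ) (M : Matrix (Fin n) (Fin n) ℝ)
    (h : ∀ p q, ‖S p q‖ ≤ M p q) (k : ℕ) :
    ∀ p q, ‖(S ^ k) p q‖ ≤ (M ^ k) p q := by
  induction k with
  | zero =>
      intro p q
      simp only [pow_zero, Matrix.one_apply]
      split <;> simp
  | succ k ih =>
      intro p q
      rw [pow_succ, pow_succ, Matrix.mul_apply, Matrix.mul_apply]
      calc ‖∑ i, (S ^ k) p i * S i q‖ ≤ ∑ i, ‖(S ^ k) p i * S i q‖ := norm_sum_le _ _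
        _ = ∑ i, ‖(S ^ k) p i‖ * ‖S i q‖ := by simp [norm_mul]
        _ ≤ ∑ i, (M ^ k) p i * M i q := Finset.sum_le_sum fun i _ =>
            mul_le_mul (ih p i) (h i q) (norm_nonneg _)
              (le_trans (norm_nonneg _) (ih p i))


lemma spec_norm_le {m : ℕ} (B : Matrix (Fin (m+1)) (Fin (m+1)) ℂ) {z : ℂ}
    (hz : z ∈ spectrum ℂ B) : ‖z‖ ≤ (spectralRadius ℂ B).toReal := by
  haveI : NormOneClass (Matrix (Fin (m+1)) (Fin (m+1)) ℂ) := ⟨by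
    rw [Matrix.cstar_norm_def, _root_.map_one]; exact ContinuousLinearMap.norm_id⟩
  have hfin : spectralRadius ℂ B ≠ ⊤ :=
    ne_top_of_le_ne_top ENNReal.coe_ne_top (spectrum.spectralRadius_le_nnnorm (𝕜 := ℂ) B)
  have hrfl : spectralRadius ℂ B = ⨆ k ∈ spectrum ℂ B, (‖k‖₊ : ℝ≥0∞) := rfl
  have hle : (‖z‖₊ : ℝ≥0∞) ≤ spectralRadius ℂ B := by
    rw [hrfl]
    exact le_iSup₂ (f := fun k (_ : k ∈ spectrum ℂ B) => (‖k‖₊ : ℝ≥0∞)) z hz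
  calc ‖z‖ = ((‖z‖₊ : ℝ≥0∞)).toReal := by simp
    _ ≤ _ := ENNReal.toReal_mono hfin hle

lemma conj_pow {m : ℕ} (U T : Matrix (Fin m) (Fin m) ℂ) (hU : Uᴴ * U = 1)
    (hU' : U * Uᴴ = 1) (k : ℕ) : (U * T * Uᴴ) ^ k = U * T ^ k * Uᴴ := by
  induction k with
  | zero => rw [pow_zero, pow_zero, Matrix.mul_one, hU']
  | succ k ih =>
      rw [pow_succ, pow_succ, ih]
      simp only [Matrix.mul_assoc]
      rw [← Matrix.mul_assoc Uᴴ U (T * Uᴴ), hU, Matrix.one_mul]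

end Stmt16

open Stmt16 in
/-- for every real `n × n` matrix `A` and every `k`,
`‖A^k‖₂ ≤ √n · Σ_{j=0}^{n−1} C(n−1,j) C(k,j) ‖A‖₂^j ρ(A)^{k−j}`
(where `C(k,j) = 0` for `j > k`). -/
theorem statement16 {n : ℕ} (A : Matrix (Fin n) (Fin n) ℝ) (k : ℕ) :
    ‖A ^ k‖ ≤ Real.sqrt n * ∑ j ∈ Finset.range n,
      (Nat.choose (n - 1) j : ℝ) * (Nat.choose k j : ℝ) * ‖A‖ ^ j * specRad A ^ (k - j) := by
  by_cases hn : n = 0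
  · subst hn
    have hA : A ^ k = 0 := by ext p q; exact p.elim0
    rw [hA]
    simp
  · obtain ⟨m, rfl⟩ := Nat.exists_eq_succ_of_ne_zero hn
    set B : Matrix (Fin (m+1)) (Fin (m+1)) ℂ := A.map (algebraMap ℝ ℂ) with hBdef
    obtain ⟨U, T, hU, hU', hBUT, htri, hdiag⟩ := schur B
    set c : ℝ := ‖A‖ with hcdef
    set r : ℝ := specRad A with hrdef
    have hc0 : 0 ≤ c := norm_nonneg A
    have hr0 : 0 ≤ r := ENNReal.toReal_nonneg
    have hUn : ‖U‖ ≤ 1 := unitary_norm_le U hU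
    have hUHn : ‖Uᴴ‖ ≤ 1 := by rw [Matrix.l2_opNorm_conjTranspose]; exact hUn
    have hBA : ‖B‖ ≤ c := mapC_le_real A
    have hTeq : T = Uᴴ * (B * U) := by
      rw [hBUT]
      simp only [Matrix.mul_assoc]
      rw [← Matrix.mul_assoc Uᴴ U (T * (Uᴴ * U)), hU, Matrix.one_mul, Matrix.mul_one]
    have hTc : ‖T‖ ≤ c := by
      calc ‖T‖ = ‖Uᴴ * (B * U)‖ := by rw [← hTeq]
        _ ≤ ‖Uᴴ‖ * ‖B * U‖ := Matrix.l2_opNorm_mul _ _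
        _ ≤ ‖B * U‖ := mul_le_of_le_one_left (norm_nonneg _) hUHn
        _ ≤ ‖B‖ * ‖U‖ := Matrix.l2_opNorm_mul _ _
        _ ≤ ‖B‖ := mul_le_of_le_one_right (norm_nonneg _) hUn
        _ ≤ c := hBA
    have hTr : ∀ p, ‖T p p‖ ≤ r := fun p => spec_norm_le B (hdiag p)
    set M : Matrix (Fin (m+1)) (Fin (m+1)) ℝ := r • 1 + c • matN (m+1) with hMdef
    have hdom : ∀ p q, ‖T p q‖ ≤ M p q := by
      intro p q
      have hM : M p q = r * (if p = q then 1 else 0)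
          + c * (if (p : ℕ) < (q : ℕ) then 1 else 0) := by
        rw [hMdef, Matrix.add_apply, Matrix.smul_apply, Matrix.smul_apply,
          Matrix.one_apply, smul_eq_mul, smul_eq_mul]
        rfl
      rcases lt_trichotomy ((p : ℕ)) ((q : ℕ)) with hlt | heq | hgt
      · have hne : p ≠ q := fun h => by rw [h] at hlt; exact lt_irrefl _ hlt
        rw [hM, if_neg hne, if_pos hlt, mul_zero, mul_one, zero_add]
        exact le_trans (entry_le_norm T p q) hTc
      · have heq' : p = q := Fin.ext heq
        subst heq'
        rw [hM, if_pos rfl, if_neg (lt_irrefl _), mul_one, mul_zero, add_zero]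
        exact hTr p
      · have hne : p ≠ q := fun h => by rw [h] at hgt; exact lt_irrefl _ hgt
        rw [hM, if_neg hne, if_neg (by omega), htri p q hgt, norm_zero,
          mul_zero, mul_zero, add_zero]
    have hdompow := pow_entry_dom T M hdom k
    -- binomial expansion of M ^ k
    have hcomm : Commute (c • matN (m+1)) (r • (1 : Matrix (Fin (m+1)) (Fin (m+1)) ℝ)) :=
      ((Commute.one_right (c • matN (m+1))).smul_right r)
    have hnat : ∀ d : ℕ, ((d : ℕ) : Matrix (Fin (m+1)) (Fin (m+1)) ℝ) = (d : ℝ) • 1 := by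
      intro d
      rw [← Matrix.diagonal_natCast (n := Fin (m+1)) (α := ℝ) d]
      ext p q
      by_cases h : p = q <;> simp [h, Matrix.diagonal_apply, Matrix.one_apply]
    have hMk : M ^ k = ∑ j ∈ Finset.range (k+1),
        (c ^ j * r ^ (k - j) * (k.choose j : ℝ)) • (matN (m+1)) ^ j := by
      have hM' : M = c • matN (m+1) + r • (1 : Matrix (Fin (m+1)) (Fin (m+1)) ℝ) := by
        rw [hMdef, add_comm (r • (1 : Matrix (Fin (m+1)) (Fin (m+1)) ℝ)) (c • matN (m+1))]
      rw [hM', hcomm.add_pow k]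
      refine Finset.sum_congr rfl fun j hj => ?_
      rw [smul_pow, smul_pow, one_pow, hnat (k.choose j)]
      rw [Matrix.smul_mul, Matrix.mul_smul, Matrix.mul_one, Matrix.mul_smul,
        smul_smul, smul_smul]
      congr 1
      · ring
      · rw [Matrix.mul_one]
    -- row sums
    set S : ℝ := ∑ j ∈ Finset.range (m+1),
        (Nat.choose m j : ℝ) * (Nat.choose k j : ℝ) * c ^ j * r ^ (k - j) with hSdef
    have hS0 : 0 ≤ S := Finset.sum_nonneg fun j _ => by positivity
    have hpad : ∑ j ∈ Finset.range (k+1),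
        (Nat.choose m j : ℝ) * (Nat.choose k j : ℝ) * c ^ j * r ^ (k - j) = S := by
      rw [hSdef]
      have h1 : ∀ N : ℕ, (k+1) ≤ N →
          ∑ j ∈ Finset.range (k+1),
            (Nat.choose m j : ℝ) * (Nat.choose k j : ℝ) * c ^ j * r ^ (k - j)
          = ∑ j ∈ Finset.range N,
            (Nat.choose m j : ℝ) * (Nat.choose k j : ℝ) * c ^ j * r ^ (k - j) := by
        intro N hN
        refine Finset.sum_subset (Finset.range_subset_range.mpr hN) fun x _ hx => ?_
        rw [Finset.mem_range, not_lt] at hx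
        rw [Nat.choose_eq_zero_of_lt (show k < x by omega), Nat.cast_zero, mul_zero,
          zero_mul, zero_mul]
      have h2 : ∀ N : ℕ, (m+1) ≤ N →
          ∑ j ∈ Finset.range (m+1),
            (Nat.choose m j : ℝ) * (Nat.choose k j : ℝ) * c ^ j * r ^ (k - j)
          = ∑ j ∈ Finset.range N,
            (Nat.choose m j : ℝ) * (Nat.choose k j : ℝ) * c ^ j * r ^ (k - j) := by
        intro N hN
        refine Finset.sum_subset (Finset.range_subset_range.mpr hN) fun x _ hx => ?_
        rw [Finset.mem_range, not_lt] at hx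
        rw [Nat.choose_eq_zero_of_lt (show m < x by omega), Nat.cast_zero, zero_mul,
          zero_mul, zero_mul]
      rw [h1 (max (k+1) (m+1)) (le_max_left _ _), h2 (max (k+1) (m+1)) (le_max_right _ _)]
    have hrows : ∀ p, ∑ q, ‖(T ^ k) p q‖ ≤ S := by
      intro p
      have h1 : ∑ q, ‖(T ^ k) p q‖ ≤ ∑ q, (M ^ k) p q :=
        Finset.sum_le_sum fun q _ => hdompow p q
      have h2 : ∑ q, (M ^ k) p q = ∑ j ∈ Finset.range (k+1),
          (c ^ j * r ^ (k - j) * (k.choose j : ℝ)) * (∑ q, ((matN (m+1)) ^ j) p q) := by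
        rw [hMk]
        calc ∑ q, (∑ j ∈ Finset.range (k+1),
              (c ^ j * r ^ (k - j) * (k.choose j : ℝ)) • (matN (m+1)) ^ j) p q
            = ∑ q, ∑ j ∈ Finset.range (k+1),
              (c ^ j * r ^ (k - j) * (k.choose j : ℝ)) * ((matN (m+1)) ^ j) p q := by
              refine Finset.sum_congr rfl fun q _ => ?_
              rw [Matrix.sum_apply]
              exact Finset.sum_congr rfl fun j _ => rfl
          _ = ∑ j ∈ Finset.range (k+1), ∑ q,
              (c ^ j * r ^ (k - j) * (k.choose j : ℝ)) * ((matN (m+1)) ^ j) p q :=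
              Finset.sum_comm
          _ = _ := Finset.sum_congr rfl fun j _ => (Finset.mul_sum _ _ _).symm
      have h3 : ∑ j ∈ Finset.range (k+1),
          (c ^ j * r ^ (k - j) * (k.choose j : ℝ)) * (∑ q, ((matN (m+1)) ^ j) p q)
          ≤ ∑ j ∈ Finset.range (k+1),
          (c ^ j * r ^ (k - j) * (k.choose j : ℝ)) * (Nat.choose m j : ℝ) := by
        refine Finset.sum_le_sum fun j _ => ?_
        refine mul_le_mul_of_nonneg_left ?_ (by positivity)
        refine le_trans (matN_pow_rowsum j p) ?_
        have : (m + 1 - 1 - (p : ℕ)).choose j ≤ m.choose j :=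
          Nat.choose_le_choose j (by omega)
        exact_mod_cast this
      have h4 : ∑ j ∈ Finset.range (k+1),
          (c ^ j * r ^ (k - j) * (k.choose j : ℝ)) * (Nat.choose m j : ℝ) = S := by
        rw [← hpad]
        exact Finset.sum_congr rfl fun j _ => by ring
      calc ∑ q, ‖(T ^ k) p q‖ ≤ ∑ q, (M ^ k) p q := h1
        _ = _ := h2
        _ ≤ _ := h3
        _ = S := h4
    have hTkS : ‖T ^ k‖ ≤ Real.sqrt ((m+1 : ℕ) : ℝ) * S := norm_le_sqrt_row _ hS0 hrows
    have hmap : (A ^ k).map (algebraMap ℝ ℂ) = B ^ k := by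
      rw [hBdef, ← RingHom.mapMatrix_apply, ← RingHom.mapMatrix_apply, map_pow]
    have hfin : ‖A ^ k‖ ≤ Real.sqrt ((m+1 : ℕ) : ℝ) * S := by
      calc ‖A ^ k‖ ≤ ‖(A ^ k).map (algebraMap ℝ ℂ)‖ := real_le_mapC _
        _ = ‖B ^ k‖ := by rw [hmap]
        _ = ‖U * T ^ k * Uᴴ‖ := by rw [hBUT, conj_pow U T hU hU' k]
        _ ≤ ‖U * T ^ k‖ * ‖Uᴴ‖ := Matrix.l2_opNorm_mul _ _
        _ ≤ ‖U * T ^ k‖ := mul_le_of_le_one_right (norm_nonneg _) hUHn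
        _ ≤ ‖U‖ * ‖T ^ k‖ := Matrix.l2_opNorm_mul _ _
        _ ≤ ‖T ^ k‖ := mul_le_of_le_one_left (norm_nonneg _) hUn
        _ ≤ _ := hTkS
    refine le_trans hfin (le_of_eq ?_)
    congr 1
end

section
/- Under the sensor-network assumptions, there exist constants M′ > 0 and q ∈ (0,1) such that for every sensor i ∈ {1,…,N}, every integer L ≥ d, and every k ∈ ℕ, ‖R_k^{−1} − (R̃_{i,k}^{(L)})^{−1}‖₂ ≤ M′ q^L, where R_k = blockdiag(R_{1,k},…,R_{N,k}) and R̃_{i,k}^{(L)} = blockdiag(R_{1,k}/(N l_{i1}^{(L)}),…,R_{N,k}/(N l_{iN}^{(L)})). -/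
open Matrix

open scoped Matrix.Norms.L2Operator

section AuxStatement18

lemma aux18_pow_nonneg {N : ℕ} (𝓛 : Matrix (Fin N) (Fin N) ℝ)
    (hnn : ∀ i j, 0 ≤ 𝓛 i j) : ∀ L i j, 0 ≤ (𝓛 ^ L) i j := by
  intro L
  induction L with
  | zero => intro i j; by_cases h : i = j <;> simp [Matrix.one_apply, h]
  | succ L ih =>
    intro i j
    rw [pow_succ, Matrix.mul_apply]
    exact Finset.sum_nonneg fun t _ => mul_nonneg (ih i t) (hnn t j)

lemma aux18_row_sum_pow {N : ℕ} (𝓛 : Matrix (Fin N) (Fin N) ℝ)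
    (hrow : ∀ i, ∑ j, 𝓛 i j = 1) : ∀ L i, ∑ j, (𝓛 ^ L) i j = 1 := by
  intro L
  induction L with
  | zero => intro i; simp [Matrix.one_apply]
  | succ L ih =>
    intro i
    rw [pow_succ]
    simp only [Matrix.mul_apply]
    rw [Finset.sum_comm]
    calc ∑ t, ∑ j, (𝓛 ^ L) i t * 𝓛 t j
        = ∑ t, (𝓛 ^ L) i t * ∑ j, 𝓛 t j := by
          simp [Finset.mul_sum]
      _ = 1 := by simp [hrow, ih i]

lemma aux18_col_sum_pow {N : ℕ} (𝓛 : Matrix (Fin N) (Fin N) ℝ)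
    (hcol : ∀ j, ∑ i, 𝓛 i j = 1) : ∀ L j, ∑ i, (𝓛 ^ L) i j = 1 := by
  intro L
  induction L with
  | zero => intro j; simp [Matrix.one_apply]
  | succ L ih =>
    intro j
    rw [pow_succ']
    simp only [Matrix.mul_apply]
    rw [Finset.sum_comm]
    calc ∑ t, ∑ i, 𝓛 i t * (𝓛 ^ L) t j
        = ∑ t, (∑ i, 𝓛 i t) * (𝓛 ^ L) t j := by
          simp [Finset.sum_mul]
      _ = 1 := by simp [hcol, ih j]

/-- The oscillation (max minus min) of a vector. -/
noncomputable def aux18Osc {N : ℕ} (hne : (Finset.univ : Finset (Fin N)).Nonempty)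
    (x : Fin N → ℝ) : ℝ :=
  Finset.univ.sup' hne x - Finset.univ.inf' hne x

lemma aux18Osc_nonneg {N : ℕ} (hne : (Finset.univ : Finset (Fin N)).Nonempty)
    (x : Fin N → ℝ) : 0 ≤ aux18Osc hne x := by
  obtain ⟨a, -, ha⟩ := Finset.exists_mem_eq_sup' hne x
  have h2 : Finset.univ.inf' hne x ≤ x a := Finset.inf'_le _ (Finset.mem_univ a)
  rw [aux18Osc, ha]
  linarith

lemma aux18Osc_le_one {N : ℕ} (hne : (Finset.univ : Finset (Fin N)).Nonempty)
    (x : Fin N → ℝ) (h0 : ∀ t, 0 ≤ x t) (h1 : ∀ t, x t ≤ 1) :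
    aux18Osc hne x ≤ 1 := by
  have hs : Finset.univ.sup' hne x ≤ 1 := Finset.sup'_le _ _ fun t _ => h1 t
  have hi : (0 : ℝ) ≤ Finset.univ.inf' hne x := Finset.le_inf' _ _ fun t _ => h0 t
  rw [aux18Osc]; linarith

/-- Doeblin-type oscillation contraction for a row-stochastic matrix with entries `≥ ε`. -/
lemma aux18_doeblin {N : ℕ} (hne : (Finset.univ : Finset (Fin N)).Nonempty)
    (B : Matrix (Fin N) (Fin N) ℝ) (ε : ℝ)
    (hB : ∀ i j, ε ≤ B i j) (hrowB : ∀ i, ∑ j, B i j = 1)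
    (x : Fin N → ℝ) :
    aux18Osc hne (B.mulVec x) ≤ (1 - N * ε) * aux18Osc hne x := by
  obtain ⟨i₀, -, hi₀⟩ := Finset.exists_mem_eq_sup' hne (B.mulVec x)
  obtain ⟨k₀, -, hk₀⟩ := Finset.exists_mem_eq_inf' hne (B.mulVec x)
  set m := Finset.univ.inf' hne x with hm
  set M := Finset.univ.sup' hne x with hM
  have hmM : m ≤ M := by
    obtain ⟨a, -, ha⟩ := Finset.exists_mem_eq_sup' hne x
    rw [hM, ha, hm]
    exact Finset.inf'_le _ (Finset.mem_univ a)
  rw [aux18Osc, aux18Osc, hi₀, hk₀, ← hm, ← hM]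
  have key : B.mulVec x i₀ - B.mulVec x k₀
      = ∑ j, (B i₀ j - B k₀ j) * (x j - m) := by
    simp only [Matrix.mulVec, dotProduct]
    have h1 : ∑ j, (B i₀ j - B k₀ j) * (x j - m)
        = (∑ j, B i₀ j * x j) - (∑ j, B k₀ j * x j)
          - ((∑ j, B i₀ j) - (∑ j, B k₀ j)) * m := by
      simp only [sub_mul, Finset.sum_mul, ← Finset.sum_sub_distrib]
      exact Finset.sum_congr rfl fun j _ => by ring
    rw [h1, hrowB i₀, hrowB k₀]; ring
  rw [key]
  calc ∑ j, (B i₀ j - B k₀ j) * (x j - m)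
      ≤ ∑ j, (B i₀ j - min (B i₀ j) (B k₀ j)) * (M - m) := by
        apply Finset.sum_le_sum
        intro j _
        rcases le_total (B i₀ j) (B k₀ j) with h | h
        · rw [min_eq_left h]
          have h2 : (B i₀ j - B k₀ j) * (x j - m) ≤ 0 := by
            apply mul_nonpos_of_nonpos_of_nonneg
            · linarith
            · have : m ≤ x j := Finset.inf'_le _ (Finset.mem_univ j)
              linarith
          simpa using h2.trans (by simp)
        · rw [min_eq_right h]
          have h1 : x j - m ≤ M - m := by
            have : x j ≤ M := Finset.le_sup' _ (Finset.mem_univ j)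
            linarith
          exact mul_le_mul_of_nonneg_left h1 (by linarith)
    _ ≤ (1 - N * ε) * (M - m) := by
        rw [← Finset.sum_mul]
        apply mul_le_mul_of_nonneg_right _ (by linarith)
        have h2 : ∑ j, (B i₀ j - min (B i₀ j) (B k₀ j))
            = 1 - ∑ j, min (B i₀ j) (B k₀ j) := by
          rw [Finset.sum_sub_distrib, hrowB i₀]
        rw [h2]
        have h3 : (N : ℝ) * ε ≤ ∑ j, min (B i₀ j) (B k₀ j) := by
          have h4 : ∑ _j : Fin N, ε ≤ ∑ j, min (B i₀ j) (B k₀ j) :=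
            Finset.sum_le_sum fun j _ => le_min (hB i₀ j) (hB k₀ j)
          simpa [mul_comm] using h4
        linarith

/-- If the entries of a nonnegative vector sum to `1`, every entry is within the
oscillation of `1/N`. -/
lemma aux18_close {N : ℕ} (hne : (Finset.univ : Finset (Fin N)).Nonempty)
    (x : Fin N → ℝ) (hsum : ∑ t, x t = 1) (t : Fin N) :
    |(N : ℝ) * x t - 1| ≤ (N : ℝ) * aux18Osc hne x := by
  obtain ⟨a, -⟩ := id hne
  have hN0 : 0 < N := a.pos
  have hNR : (0 : ℝ) ≤ (N : ℝ) := by positivity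
  set m := Finset.univ.inf' hne x with hm
  set M := Finset.univ.sup' hne x with hM
  have h1 : x t ≤ M := Finset.le_sup' _ (Finset.mem_univ t)
  have h2 : m ≤ x t := Finset.inf'_le _ (Finset.mem_univ t)
  have hS : 1 ≤ (N : ℝ) * M := by
    have : ∑ s, x s ≤ ∑ _s : Fin N, M :=
      Finset.sum_le_sum fun s _ => Finset.le_sup' _ (Finset.mem_univ s)
    rw [hsum] at this
    simpa [mul_comm] using this
  have hI : (N : ℝ) * m ≤ 1 := by
    have : ∑ _s : Fin N, m ≤ ∑ s, x s :=
      Finset.sum_le_sum fun s _ => Finset.inf'_le _ (Finset.mem_univ s)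
    rw [hsum] at this
    simpa [mul_comm] using this
  have hosc : aux18Osc hne x = M - m := rfl
  rw [hosc, abs_le]
  constructor
  · have := mul_le_mul_of_nonneg_left h2 hNR
    nlinarith
  · have := mul_le_mul_of_nonneg_left h1 hNR
    nlinarith

end AuxStatement18

/-- under the sensor-network assumptions, the inverse of the consensus-weighted
noise covariance `R̃_{i,k}^{(L)}` converges to `R_k⁻¹` exponentially in the fusion step `L`,
uniformly in the sensor `i` and the time `k`. -/
theorem statement18 {N T : ℕ} (hT : 1 ≤ T) (nd : Fin N → ℕ)
    (Rs : ∀ j : Fin N, ℕ → Matrix (Fin (nd j)) (Fin (nd j)) ℝ)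
    (hRper : ∀ j k, Rs j (k + T) = Rs j k)
    (hRpd : ∀ j k, (Rs j k).PosDef)
    (𝓛 : Matrix (Fin N) (Fin N) ℝ)
    (hnn : ∀ i j, 0 ≤ 𝓛 i j)
    (hrow : ∀ i, ∑ j, 𝓛 i j = 1) (hcol : ∀ j, ∑ i, 𝓛 i j = 1)
    (heig1 : ((𝓛.map (algebraMap ℝ ℂ)).charpoly).rootMultiplicity 1 = 1)
    (heig : ∀ μ ∈ spectrum ℂ (𝓛.map (algebraMap ℝ ℂ)), μ ≠ 1 → ‖μ‖ < 1)
    (d : ℕ) (hd : ∀ L, d ≤ L → ∀ i j, 0 < (𝓛 ^ L) i j)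
    (R : ℕ → Matrix ((j : Fin N) × Fin (nd j)) ((j : Fin N) × Fin (nd j)) ℝ)
    (hR : ∀ k, R k = Matrix.blockDiagonal' fun j => Rs j k)
    (Rtil : Fin N → ℕ → ℕ →
      Matrix ((j : Fin N) × Fin (nd j)) ((j : Fin N) × Fin (nd j)) ℝ)
    (hRtil : ∀ i L k, Rtil i L k =
      Matrix.blockDiagonal' fun j => ((N : ℝ) * (𝓛 ^ L) i j)⁻¹ • Rs j k) :
    ∃ M' : ℝ, 0 < M' ∧ ∃ q : ℝ, q ∈ Set.Ioo (0 : ℝ) 1 ∧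
      ∀ (i : Fin N) (L k : ℕ), d ≤ L →
        ‖(R k)⁻¹ - (Rtil i L k)⁻¹‖ ≤ M' * q ^ L := by
  have hdet : ∀ j k, IsUnit (Rs j k).det := fun j k => (hRpd j k).det_pos.ne'.isUnit
  have hinv : ∀ k, (R k)⁻¹ = Matrix.blockDiagonal' fun j => (Rs j k)⁻¹ := by
    intro k
    apply Matrix.inv_eq_right_inv
    rw [hR, ← Matrix.blockDiagonal'_mul]
    have h1 : (fun j => Rs j k * (Rs j k)⁻¹)
        = fun j => (1 : Matrix (Fin (nd j)) (Fin (nd j)) ℝ) := by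
      funext j; exact Matrix.mul_nonsing_inv _ (hdet j k)
    rw [h1]
    exact Matrix.blockDiagonal'_one
  rcases Nat.lt_or_ge N 2 with hN | hN2
  · -- degenerate cases `N = 0` and `N = 1`: the difference is identically zero
    refine ⟨1, one_pos, 1/2, ⟨by norm_num, by norm_num⟩, ?_⟩
    intro i L k hL
    interval_cases N
    · exact i.elim0
    · have h1 : ∀ a b : Fin 1, (𝓛 ^ L) a b = 1 := by
        intro a b
        have hs := aux18_row_sum_pow 𝓛 hrow L a
        have hb : b = 0 := Subsingleton.elim _ _
        rw [hb]
        simpa using hs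
      have h2 : Rtil i L k = R k := by
        rw [hRtil, hR]
        refine congrArg _ (funext fun j => ?_)
        rw [h1 i j]
        norm_num
      rw [h2, sub_self, norm_zero]
      positivity
  -- main case `N ≥ 2`
  have hneF : (Finset.univ : Finset (Fin N)).Nonempty :=
    ⟨⟨0, by omega⟩, Finset.mem_univ _⟩
  have hneP : (Finset.univ : Finset (Fin N × Fin N)).Nonempty :=
    ⟨(⟨0, by omega⟩, ⟨0, by omega⟩), Finset.mem_univ _⟩
  have hd1 : 1 ≤ d := by
    by_contra h
    have h0 : d = 0 := by omega
    have h2 := hd 0 (by omega) ⟨0, by omega⟩ ⟨1, by omega⟩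
    rw [pow_zero, Matrix.one_apply_ne (by simp [Fin.ext_iff])] at h2
    exact lt_irrefl _ h2
  have hNpos : (0 : ℝ) < (N : ℝ) := by exact_mod_cast (by omega : 0 < N)
  -- the contraction constants
  set ε := Finset.univ.inf' hneP (fun p : Fin N × Fin N => (𝓛 ^ d) p.1 p.2) with hεdef
  have hε0 : 0 < ε := by
    rw [hεdef, Finset.lt_inf'_iff]
    exact fun p _ => hd d le_rfl p.1 p.2
  have hεle : ∀ i j, ε ≤ (𝓛 ^ d) i j := fun i j =>
    Finset.inf'_le _ (Finset.mem_univ (i, j))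
  have hNε1 : (N : ℝ) * ε ≤ 1 := by
    have hs := aux18_row_sum_pow 𝓛 hrow d ⟨0, by omega⟩
    have h1 : ∑ _j : Fin N, ε ≤ ∑ j, (𝓛 ^ d) ⟨0, by omega⟩ j :=
      Finset.sum_le_sum fun j _ => hεle _ j
    rw [hs] at h1
    simpa [mul_comm] using h1
  have hNε0 : 0 < (N : ℝ) * ε := mul_pos hNpos hε0
  set c' : ℝ := max (1 - (N : ℝ) * ε) (1 / 2) with hc'def
  have hc'0 : (0 : ℝ) < c' := lt_of_lt_of_le (by norm_num) (le_max_right _ _)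
  have hc'1 : c' < 1 := max_lt (by linarith) (by norm_num)
  set q : ℝ := c' ^ ((d : ℝ)⁻¹) with hqdef
  have hq0 : 0 < q := Real.rpow_pos_of_pos hc'0 _
  have hq1 : q < 1 := by
    have hdR : (0 : ℝ) < (d : ℝ)⁻¹ := by
      have : (0 : ℝ) < (d : ℝ) := by exact_mod_cast (by omega : 0 < d)
      positivity
    exact Real.rpow_lt_one hc'0.le hc'1 hdR
  have hqd : q ^ d = c' := by
    rw [hqdef, ← Real.rpow_natCast (c' ^ ((d : ℝ)⁻¹)) d, ← Real.rpow_mul hc'0.le,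
      inv_mul_cancel₀ (by exact_mod_cast (by omega : d ≠ 0) : (d : ℝ) ≠ 0), Real.rpow_one]
  -- columns of matrix products as mulVec
  have hcolmul : ∀ (a b : ℕ) (j t : Fin N),
      (𝓛 ^ (a + b)) t j = (𝓛 ^ a).mulVec (fun s => (𝓛 ^ b) s j) t := by
    intro a b j t
    rw [pow_add, Matrix.mul_apply]
    simp [Matrix.mulVec, dotProduct]
  -- geometric decay of the oscillation along multiples of d
  have hstep : ∀ (m : ℕ) (j : Fin N),
      aux18Osc hneF (fun t => (𝓛 ^ (d + m * d)) t j) ≤ c' ^ m := by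
    intro m
    induction m with
    | zero =>
      intro j
      have he : d + 0 * d = d := by ring
      rw [he, pow_zero]
      apply aux18Osc_le_one
      · exact fun t => aux18_pow_nonneg 𝓛 hnn d t j
      · intro t
        have hs := aux18_row_sum_pow 𝓛 hrow d t
        have h1 : (𝓛 ^ d) t j ≤ ∑ j', (𝓛 ^ d) t j' :=
          Finset.single_le_sum (fun j' _ => aux18_pow_nonneg 𝓛 hnn d t j')
            (Finset.mem_univ j)
        linarith
    | succ m ih =>
      intro j
      have he : d + (m + 1) * d = d + (d + m * d) := by ring
      have hc : (fun t => (𝓛 ^ (d + (m + 1) * d)) t j)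
          = (𝓛 ^ d).mulVec (fun s => (𝓛 ^ (d + m * d)) s j) := by
        funext t
        rw [he]
        exact hcolmul d (d + m * d) j t
      calc aux18Osc hneF (fun t => (𝓛 ^ (d + (m + 1) * d)) t j)
          ≤ (1 - (N : ℝ) * ε) * aux18Osc hneF (fun s => (𝓛 ^ (d + m * d)) s j) := by
            rw [hc]
            exact aux18_doeblin hneF _ ε hεle (aux18_row_sum_pow 𝓛 hrow d) _
        _ ≤ c' * c' ^ m := by
            apply mul_le_mul (le_max_left _ _) (ih j) (aux18Osc_nonneg _ _) hc'0.le
        _ = c' ^ (m + 1) := by ring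
  -- geometric decay of the oscillation for all L ≥ d
  have hosc : ∀ (j : Fin N) (L : ℕ), d ≤ L →
      aux18Osc hneF (fun t => (𝓛 ^ L) t j) ≤ c'⁻¹ * c'⁻¹ * q ^ L := by
    intro j L hL
    set m := (L - d) / d with hmdef
    set r := (L - d) % d with hrdef
    have hdm : d * m + r = L - d := by
      rw [hmdef, hrdef]; exact Nat.div_add_mod _ _
    have hLe : L = r + (d + m * d) := by
      calc L = (L - d) + d := (Nat.sub_add_cancel hL).symm
        _ = (d * m + r) + d := by rw [hdm]
        _ = r + (d + m * d) := by ring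
    have hrd : r ≤ d := by
      have h5 := Nat.mod_lt (L - d) (show 0 < d by omega)
      rw [← hrdef] at h5
      exact h5.le
    have h1 : aux18Osc hneF (fun t => (𝓛 ^ L) t j) ≤ c' ^ m := by
      have hc : (fun t => (𝓛 ^ L) t j)
          = (𝓛 ^ r).mulVec (fun s => (𝓛 ^ (d + m * d)) s j) := by
        funext t
        rw [hLe]
        exact hcolmul r (d + m * d) j t
      calc aux18Osc hneF (fun t => (𝓛 ^ L) t j)
          ≤ (1 - (N : ℝ) * 0) * aux18Osc hneF (fun s => (𝓛 ^ (d + m * d)) s j) := by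
            rw [hc]
            exact aux18_doeblin hneF _ 0 (fun a b => aux18_pow_nonneg 𝓛 hnn r a b)
              (aux18_row_sum_pow 𝓛 hrow r) _
        _ = aux18Osc hneF (fun s => (𝓛 ^ (d + m * d)) s j) := by ring
        _ ≤ c' ^ m := hstep m j
    have hqL : q ^ L = q ^ r * (c' * c' ^ m) := by
      rw [hLe, pow_add, pow_add, pow_mul', hqd]
    have h2 : c' * (c' * c' ^ m) ≤ q ^ L := by
      rw [hqL, ← hqd]
      exact mul_le_mul_of_nonneg_right
        (pow_le_pow_of_le_one hq0.le hq1.le hrd) (by positivity)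
    have h3 := mul_le_mul_of_nonneg_left h2 (by positivity : (0 : ℝ) ≤ c'⁻¹ * c'⁻¹)
    have h4 : c'⁻¹ * c'⁻¹ * (c' * (c' * c' ^ m)) = c' ^ m := by
      field_simp
    linarith
  -- entrywise bound
  have hkey : ∀ (i : Fin N) (L : ℕ), d ≤ L → ∀ j,
      |1 - (N : ℝ) * (𝓛 ^ L) i j| ≤ (N : ℝ) * (c'⁻¹ * c'⁻¹ * q ^ L) := by
    intro i L hL j
    rw [abs_sub_comm]
    have hsum : ∑ t, (𝓛 ^ L) t j = 1 := aux18_col_sum_pow 𝓛 hcol L j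
    calc |(N : ℝ) * (𝓛 ^ L) i j - 1|
        ≤ (N : ℝ) * aux18Osc hneF (fun t => (𝓛 ^ L) t j) :=
          aux18_close hneF (fun t => (𝓛 ^ L) t j) hsum i
      _ ≤ (N : ℝ) * (c'⁻¹ * c'⁻¹ * q ^ L) :=
          mul_le_mul_of_nonneg_left (hosc j L hL) hNpos.le
  -- block machinery
  have hper' : ∀ (j : Fin N) (k : ℕ), Rs j k = Rs j (k % T) := by
    intro j k
    have hmul : ∀ (m k' : ℕ), Rs j (k' + T * m) = Rs j k' := by
      intro m
      induction m with
      | zero => simp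
      | succ m ih =>
        intro k'
        rw [Nat.mul_succ, ← Nat.add_assoc, hRper, ih]
    conv_lhs => rw [← Nat.mod_add_div k T]
    exact hmul (k / T) (k % T)
  set G : Fin N → ℕ → Matrix ((j : Fin N) × Fin (nd j)) ((j : Fin N) × Fin (nd j)) ℝ :=
    fun j k => Matrix.blockDiagonal' (Pi.single j ((Rs j k)⁻¹)) with hGdef
  set C₀ : ℝ := 1 + ∑ j, ∑ k' ∈ Finset.range T, ‖G j k'‖ with hC₀def
  have hC₀pos : 0 < C₀ := by
    rw [hC₀def]
    have : (0 : ℝ) ≤ ∑ j, ∑ k' ∈ Finset.range T, ‖G j k'‖ :=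
      Finset.sum_nonneg fun _ _ => Finset.sum_nonneg fun _ _ => norm_nonneg _
    linarith
  have hGle : ∀ (j : Fin N) (k : ℕ), ‖G j k‖ ≤ C₀ := by
    intro j k
    have he : G j k = G j (k % T) := by
      simp only [hGdef]
      rw [hper' j k]
    rw [he]
    have h1 : ‖G j (k % T)‖ ≤ ∑ k' ∈ Finset.range T, ‖G j k'‖ :=
      Finset.single_le_sum (fun _ _ => norm_nonneg _)
        (Finset.mem_range.2 (Nat.mod_lt _ (by omega)))
    have h2 : ∑ k' ∈ Finset.range T, ‖G j k'‖
        ≤ ∑ j', ∑ k' ∈ Finset.range T, ‖G j' k'‖ :=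
      Finset.single_le_sum
        (fun _ _ => Finset.sum_nonneg fun _ _ => norm_nonneg _) (Finset.mem_univ j)
    rw [hC₀def]
    linarith
  have hpos : ∀ (i : Fin N) (L : ℕ), d ≤ L → ∀ j, 0 < (N : ℝ) * (𝓛 ^ L) i j :=
    fun i L hL j => mul_pos hNpos (hd L hL i j)
  have hinvtil : ∀ (i : Fin N) (L k : ℕ), d ≤ L →
      (Rtil i L k)⁻¹
        = Matrix.blockDiagonal' fun j => ((N : ℝ) * (𝓛 ^ L) i j) • (Rs j k)⁻¹ := by
    intro i L k hL
    apply Matrix.inv_eq_right_inv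
    rw [hRtil, ← Matrix.blockDiagonal'_mul]
    have h1 : (fun j => (((N : ℝ) * (𝓛 ^ L) i j)⁻¹ • Rs j k)
          * (((N : ℝ) * (𝓛 ^ L) i j) • (Rs j k)⁻¹))
        = fun j => (1 : Matrix (Fin (nd j)) (Fin (nd j)) ℝ) := by
      funext j
      rw [Matrix.smul_mul, Matrix.mul_smul, smul_smul,
        inv_mul_cancel₀ (hpos i L hL j).ne', one_smul,
        Matrix.mul_nonsing_inv _ (hdet j k)]
    rw [h1]
    exact Matrix.blockDiagonal'_one
  have hdiff : ∀ (i : Fin N) (L k : ℕ), d ≤ L →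
      (R k)⁻¹ - (Rtil i L k)⁻¹
        = ∑ j, (1 - (N : ℝ) * (𝓛 ^ L) i j) • G j k := by
    intro i L k hL
    rw [hinv, hinvtil i L k hL, ← Matrix.blockDiagonal'_sub]
    have h1 : ((fun j => (Rs j k)⁻¹)
          - fun j => ((N : ℝ) * (𝓛 ^ L) i j) • (Rs j k)⁻¹)
        = fun j => (1 - (N : ℝ) * (𝓛 ^ L) i j) • (Rs j k)⁻¹ := by
      funext j
      simp only [Pi.sub_apply]
      rw [sub_smul, one_smul]
    rw [h1]
    have h2 : (fun j => (1 - (N : ℝ) * (𝓛 ^ L) i j) • (Rs j k)⁻¹)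
        = ∑ j, Pi.single j ((1 - (N : ℝ) * (𝓛 ^ L) i j) • (Rs j k)⁻¹) :=
      (Finset.univ_sum_single _).symm
    rw [h2]
    have h3 : Matrix.blockDiagonal'
          (∑ j, Pi.single j ((1 - (N : ℝ) * (𝓛 ^ L) i j) • (Rs j k)⁻¹))
        = ∑ j, Matrix.blockDiagonal'
            (Pi.single j ((1 - (N : ℝ) * (𝓛 ^ L) i j) • (Rs j k)⁻¹)) :=
      map_sum (Matrix.blockDiagonal'AddMonoidHom (fun j => Fin (nd j))
        (fun j => Fin (nd j)) ℝ) _ Finset.univ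
    rw [h3]
    apply Finset.sum_congr rfl
    intro j _
    simp only [Pi.single_smul, Matrix.blockDiagonal'_smul, hGdef]
  -- assemble
  refine ⟨(N : ℝ) * ((N : ℝ) * (c'⁻¹ * c'⁻¹)) * C₀, by positivity, q, ⟨hq0, hq1⟩, ?_⟩
  intro i L k hL
  rw [hdiff i L k hL]
  calc ‖∑ j, (1 - (N : ℝ) * (𝓛 ^ L) i j) • G j k‖
      ≤ ∑ j, ‖(1 - (N : ℝ) * (𝓛 ^ L) i j) • G j k‖ := norm_sum_le _ _
    _ ≤ ∑ _j : Fin N, ((N : ℝ) * (c'⁻¹ * c'⁻¹ * q ^ L)) * C₀ := by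
        apply Finset.sum_le_sum
        intro j _
        rw [norm_smul, Real.norm_eq_abs]
        exact mul_le_mul (hkey i L hL j) (hGle j k) (norm_nonneg _)
          (by positivity)
    _ = (N : ℝ) * ((N : ℝ) * (c'⁻¹ * c'⁻¹)) * C₀ * q ^ L := by
        rw [Finset.sum_const, Finset.card_univ, Fintype.card_fin, nsmul_eq_mul]
        ring
end
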